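/- arXiv:math-ph/0104017 — 4 statements merged into one kernel-verified Lean document; each statement's English description precedes it below -/
import Mathlib

section
/- Let H = ⊕_{n∈ℕ} H^n be an ℕ-graded connected bialgebra over k. For any n∈ℕ, any infinitesimal characters Z_1,…,Z_{n+1} of H, and any h ∈ ⊕_{p≤n} H^p, the (n+1)-fold convolution product satisfies ⟨Z_1 * ⋯ * Z_{n+1}, h⟩ = 0. -/
open TensorProduct

/-- The convolution product on the algebraic dual `H →ₗ[R] R` of a coalgebra `H`:
`⟨ξ * η, h⟩ = ⟨ξ ⊗ η, Δ h⟩`. -/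
noncomputable def conv {R H : Type*} [CommSemiring R] [AddCommMonoid H] [Module R H]
    [Coalgebra R H] (ξ η : H →ₗ[R] R) : H →ₗ[R] R :=
  LinearMap.mul' R R ∘ₗ TensorProduct.map ξ η ∘ₗ Coalgebra.comul

/-- The iterated convolution product `Z₁ * ⋯ * Zₙ` of a finite family of functionals
(the empty product being the counit). -/
noncomputable def convFam {R H : Type*} [CommSemiring R] [AddCommMonoid H] [Module R H]
    [Coalgebra R H] : (n : ℕ) → (Fin n → (H →ₗ[R] R)) → (H →ₗ[R] R)
  | 0, _ => Coalgebra.counit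
  | n + 1, Z => conv (Z 0) (convFam n (fun i => Z i.succ))

/-- An infinitesimal character of `H`: an `R`-linear map `Z : H → R` with
`Z (hk) = Z h * ε k + ε h * Z k`. -/
def IsInfinitesimalCharacter {R H : Type*} [CommSemiring R] [Semiring H] [Module R H]
    [Coalgebra R H] (Z : H →ₗ[R] R) : Prop :=
  ∀ a b : H, Z (a * b) = Z a * Coalgebra.counit b + Coalgebra.counit a * Z b

/-- The submodule `A ⊗ B` of `H ⊗ H` spanned by the pure tensors `a ⊗ b` with `a ∈ A`,
`b ∈ B`. -/
noncomputable def tensorSub {R H : Type*} [CommSemiring R] [AddCommMonoid H] [Module R H]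
    (A B : Submodule R H) : Submodule R (H ⊗[R] H) :=
  Submodule.span R {z : H ⊗[R] H | ∃ a ∈ A, ∃ b ∈ B, z = a ⊗ₜ[R] b}


lemma infChar_one {R H : Type*} [Field R] [Ring H] [Bialgebra R H]
    (Z : H →ₗ[R] R) (hZ : IsInfinitesimalCharacter Z) : Z 1 = 0 := by
  have h := hZ 1 1
  rw [one_mul, Bialgebra.counit_one, mul_one, one_mul] at h
  linear_combination -h

lemma conv_vanish {R H : Type*} [Field R] [Ring H] [Bialgebra R H]
    (𝒜 : ℕ → Submodule R H)
    (hcomul : ∀ n : ℕ, ∀ x ∈ 𝒜 n,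
      Coalgebra.comul (R := R) x ∈
        ⨆ (p : ℕ × ℕ) (_ : p.1 + p.2 = n), tensorSub (𝒜 p.1) (𝒜 p.2))
    (ξ η : H →ₗ[R] R) (m : ℕ)
    (hξη : ∀ i j : ℕ, i + j = m → (∀ a ∈ 𝒜 i, ξ a = 0) ∨ (∀ b ∈ 𝒜 j, η b = 0))
    (x : H) (hx : x ∈ 𝒜 m) : conv ξ η x = 0 := by
  have hmem := hcomul m x hx
  have hle : (⨆ (p : ℕ × ℕ) (_ : p.1 + p.2 = m), tensorSub (𝒜 p.1) (𝒜 p.2)) ≤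
      LinearMap.ker (LinearMap.mul' R R ∘ₗ TensorProduct.map ξ η) := by
    refine iSup_le fun p => iSup_le fun hp => ?_
    rw [tensorSub, Submodule.span_le]
    rintro z ⟨a, ha, b, hb, rfl⟩
    simp only [SetLike.mem_coe, LinearMap.mem_ker, LinearMap.comp_apply,
      TensorProduct.map_tmul, LinearMap.mul'_apply]
    rcases hξη p.1 p.2 hp with h | h
    · rw [h a ha, zero_mul]
    · rw [h b hb, mul_zero]
  have := hle hmem
  simpa [conv] using this

lemma infChar_vanish_zero {R H : Type*} [Field R] [Ring H] [Bialgebra R H]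
    (𝒜 : ℕ → Submodule R H) (hconn : 𝒜 0 = Submodule.span R {(1 : H)})
    (Z : H →ₗ[R] R) (hZ : IsInfinitesimalCharacter Z) :
    ∀ a ∈ 𝒜 0, Z a = 0 := by
  intro a ha
  rw [hconn, Submodule.mem_span_singleton] at ha
  obtain ⟨c, rfl⟩ := ha
  rw [map_smul, infChar_one Z hZ, smul_zero]

lemma convFam_vanish {R H : Type*} [Field R] [Ring H] [Bialgebra R H]
    (𝒜 : ℕ → Submodule R H)
    (hcomul : ∀ n : ℕ, ∀ x ∈ 𝒜 n,
      Coalgebra.comul (R := R) x ∈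
        ⨆ (p : ℕ × ℕ) (_ : p.1 + p.2 = n), tensorSub (𝒜 p.1) (𝒜 p.2))
    (hconn : 𝒜 0 = Submodule.span R {(1 : H)}) :
    ∀ m : ℕ, ∀ Z : Fin (m + 1) → (H →ₗ[R] R),
      (∀ i, IsInfinitesimalCharacter (Z i)) →
      ∀ p ≤ m, ∀ x ∈ 𝒜 p, convFam (m + 1) Z x = 0 := by
  intro m
  induction m with
  | zero =>
    intro Z hZ p hp x hx
    interval_cases p
    show conv (Z 0) (convFam 0 _) x = 0
    refine conv_vanish 𝒜 hcomul _ _ 0 ?_ x hx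
    intro i j hij
    obtain ⟨rfl, rfl⟩ : i = 0 ∧ j = 0 := by omega
    exact Or.inl (infChar_vanish_zero 𝒜 hconn _ (hZ 0))
  | succ m ih =>
    intro Z hZ p hp x hx
    show conv (Z 0) (convFam (m + 1) (fun i => Z i.succ)) x = 0
    refine conv_vanish 𝒜 hcomul _ _ p ?_ x hx
    intro i j hij
    rcases Nat.eq_zero_or_pos i with rfl | hi
    · exact Or.inl (infChar_vanish_zero 𝒜 hconn _ (hZ 0))
    · exact Or.inr (ih (fun i => Z i.succ) (fun i => hZ i.succ) j (by omega))

/-- In an ℕ-graded connected bialgebra `H` over a field of characteristic zero, any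
`(n+1)`-fold convolution product `Z₁ * ⋯ * Z_{n+1}` of infinitesimal characters vanishes on
every element of degree at most `n`, i.e. on `⊕_{p ≤ n} Hᵖ`. -/
theorem convolution_of_infChars_vanishes_in_low_degree
    {R H : Type*} [Field R] [CharZero R] [Ring H] [Bialgebra R H]
    (𝒜 : ℕ → Submodule R H)
    (hdirect : DirectSum.IsInternal 𝒜)
    (hmul : ∀ (p q : ℕ), ∀ a ∈ 𝒜 p, ∀ b ∈ 𝒜 q, a * b ∈ 𝒜 (p + q))
    (hcomul : ∀ n : ℕ, ∀ x ∈ 𝒜 n,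
      Coalgebra.comul (R := R) x ∈
        ⨆ (p : ℕ × ℕ) (_ : p.1 + p.2 = n), tensorSub (𝒜 p.1) (𝒜 p.2))
    (hconn : 𝒜 0 = Submodule.span R {(1 : H)})
    (n : ℕ) (Z : Fin (n + 1) → (H →ₗ[R] R))
    (hZ : ∀ i, IsInfinitesimalCharacter (Z i))
    (h : H) (hh : h ∈ ⨆ (p : ℕ) (_ : p ≤ n), 𝒜 p) :
    convFam (n + 1) Z h = 0 := by
  have hle : (⨆ (p : ℕ) (_ : p ≤ n), 𝒜 p) ≤ LinearMap.ker (convFam (n + 1) Z) := by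
    refine iSup_le fun p => iSup_le fun hp => fun x hx => ?_
    exact convFam_vanish 𝒜 hcomul hconn n Z hZ p hp x hx
  exact hle hh
end

section
/- Let H = ⊕_{n∈ℕ} H^n be an ℕ-graded connected bialgebra over k and Z an infinitesimal character of H. Then the exponential e^Z, defined on each h∈H by the sum e^Z(h) = ε(h) + Σ_{m≥1} (1/m!)⟨Z^{*m}, h⟩ (which has only finitely many nonzero terms since ⟨Z^{*m},h⟩ = 0 for m greater than the top degree of h), is a character of H: e^Z(hk) = e^Z(h)·e^Z(k) for all h,k∈H and e^Z(1)=1. -/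
open TensorProduct
open scoped DirectSum

/-- The `m`-fold convolution power `Z^{*m}` of a functional `Z` (with `Z^{*0} = ε`). -/
noncomputable def convPow {R H : Type*} [CommSemiring R] [AddCommMonoid H] [Module R H]
    [Coalgebra R H] (Z : H →ₗ[R] R) : ℕ → (H →ₗ[R] R)
  | 0 => Coalgebra.counit
  | m + 1 => conv Z (convPow Z m)

section Aux

lemma conv_apply_repr {R H : Type*} [CommSemiring R] [AddCommMonoid H] [Module R H]
    [Coalgebra R H] (ξ η : H →ₗ[R] R) (h : H) (re : Coalgebra.Repr R h (H × H)) :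
    conv ξ η h = ∑ i ∈ re.index, ξ (re.left i) * η (re.right i) := by
  simp only [conv, LinearMap.comp_apply, ← re.eq, map_sum, TensorProduct.map_tmul,
    LinearMap.mul'_apply]

lemma conv_counit_left {R H : Type*} [CommSemiring R] [AddCommMonoid H] [Module R H]
    [Coalgebra R H] (η : H →ₗ[R] R) : conv Coalgebra.counit η = η := by
  ext h
  have re := Coalgebra.Repr.arbitrary R h
  rw [conv_apply_repr _ _ _ re]
  have h1 := congrArg (fun z => η ((TensorProduct.lid R H) z))
    (Coalgebra.sum_counit_tmul_eq (R := R) re)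
  simp only [map_sum, TensorProduct.lid_tmul, map_smul, smul_eq_mul, one_smul] at h1
  exact h1

lemma pascal_sum {R : Type*} [CommSemiring R] (u v : ℕ → R) (m : ℕ) :
    ∑ i ∈ Finset.range (m + 1),
        (m.choose i : R) * (u (i + 1) * v (m - i) + u i * v (m + 1 - i)) =
      ∑ j ∈ Finset.range (m + 2), ((m + 1).choose j : R) * (u j * v (m + 1 - j)) := by
  have key : ∀ j, ((m + 1).choose (j + 1) : R) = (m.choose j : R) + (m.choose (j + 1) : R) := by
    intro j; rw [Nat.choose_succ_succ]; push_cast; ring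
  rw [Finset.sum_range_succ' (f := fun j => ((m + 1).choose j : R) * (u j * v (m + 1 - j)))]
  simp only [key, Nat.choose_zero_right, Nat.cast_one, one_mul, Nat.sub_zero]
  have e1 : ∑ i ∈ Finset.range (m + 1),
      ((m.choose i : R) + (m.choose (i + 1) : R)) * (u (i + 1) * v (m + 1 - (i + 1))) =
      (∑ i ∈ Finset.range (m + 1), (m.choose i : R) * (u (i + 1) * v (m - i))) +
      ∑ i ∈ Finset.range (m + 1), (m.choose (i + 1) : R) * (u (i + 1) * v (m - i)) := by
    rw [← Finset.sum_add_distrib]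
    apply Finset.sum_congr rfl
    intro i hi
    have : m + 1 - (i + 1) = m - i := by omega
    rw [this]; ring
  rw [e1]
  have e2 : ∑ i ∈ Finset.range (m + 1), (m.choose (i + 1) : R) * (u (i + 1) * v (m - i)) +
        u 0 * v (m + 1) =
      ∑ i ∈ Finset.range (m + 1), (m.choose i : R) * (u i * v (m + 1 - i)) := by
    rw [Finset.sum_range_succ' (f := fun i => (m.choose i : R) * (u i * v (m + 1 - i)))]
    simp only [Nat.choose_zero_right, Nat.cast_one, one_mul, Nat.sub_zero]
    congr 1
    rw [Finset.sum_range_succ]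
    simp only [Nat.choose_succ_self, Nat.cast_zero, zero_mul, add_zero]
    apply Finset.sum_congr rfl
    intro i hi
    have : m + 1 - (i + 1) = m - i := by omega
    rw [this]
  rw [add_assoc, e2, ← Finset.sum_add_distrib]
  apply Finset.sum_congr rfl
  intro i hi
  ring

lemma convPow_mul {R H : Type*} [CommSemiring R] [Semiring H] [Bialgebra R H]
    (Z : H →ₗ[R] R) (hZ : IsInfinitesimalCharacter Z) :
    ∀ (m : ℕ) (a b : H), convPow Z m (a * b) = ∑ i ∈ Finset.range (m + 1),
      (m.choose i : R) * (convPow Z i a * convPow Z (m - i) b) := by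
  intro m
  induction m with
  | zero => intro a b; simp [convPow]
  | succ m ih =>
    intro a b
    set W := convPow Z m with hW
    have key : ∀ x y : H ⊗[R] H,
        LinearMap.mul' R R (TensorProduct.map Z W (x * y)) =
        ∑ i ∈ Finset.range (m + 1), (m.choose i : R) *
          ((LinearMap.mul' R R (TensorProduct.map Z (convPow Z i) x) *
            LinearMap.mul' R R
              (TensorProduct.map Coalgebra.counit (convPow Z (m - i)) y)) +
           (LinearMap.mul' R R (TensorProduct.map Coalgebra.counit (convPow Z i) x) *
            LinearMap.mul' R R (TensorProduct.map Z (convPow Z (m - i)) y))) := by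
      intro x y
      induction x using TensorProduct.induction_on with
      | zero => simp
      | add x1 x2 h1 h2 =>
        simp only [add_mul, map_add]
        rw [h1, h2, ← Finset.sum_add_distrib]
        exact Finset.sum_congr rfl fun i _ => by ring
      | tmul a1 a2 =>
        induction y using TensorProduct.induction_on with
        | zero => simp
        | add y1 y2 h1 h2 =>
          simp only [mul_add, map_add]
          rw [h1, h2, ← Finset.sum_add_distrib]
          exact Finset.sum_congr rfl fun i _ => by ring
        | tmul b1 b2 =>
          simp only [Algebra.TensorProduct.tmul_mul_tmul, TensorProduct.map_tmul,
            LinearMap.mul'_apply]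
          rw [hZ a1 b1, ih a2 b2, Finset.mul_sum]
          exact Finset.sum_congr rfl fun i _ => by ring
    have step : convPow Z (m + 1) (a * b) = ∑ i ∈ Finset.range (m + 1), (m.choose i : R) *
        (convPow Z (i + 1) a * convPow Z (m - i) b +
          convPow Z i a * convPow Z (m - i + 1) b) := by
      have h0 : convPow Z (m + 1) (a * b) =
          LinearMap.mul' R R (TensorProduct.map Z W (Coalgebra.comul (a * b))) := rfl
      rw [h0, Bialgebra.comul_mul, key]
      apply Finset.sum_congr rfl
      intro i _
      have c1 : ∀ (ξ η : H →ₗ[R] R) (h : H),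
          LinearMap.mul' R R (TensorProduct.map ξ η (Coalgebra.comul h)) = conv ξ η h :=
        fun _ _ _ => rfl
      rw [c1, c1, c1, c1, conv_counit_left, conv_counit_left]
      rfl
    rw [step]
    have e1 : ∀ i ∈ Finset.range (m + 1), (m.choose i : R) *
        (convPow Z (i + 1) a * convPow Z (m - i) b +
          convPow Z i a * convPow Z (m - i + 1) b) = (m.choose i : R) *
        (convPow Z (i + 1) a * convPow Z (m - i) b +
          convPow Z i a * convPow Z (m + 1 - i) b) := by
      intro i hi
      have : m - i + 1 = m + 1 - i := by
        have := Finset.mem_range.mp hi; omega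
      rw [this]
    rw [Finset.sum_congr rfl e1, pascal_sum (fun i => convPow Z i a) (fun j => convPow Z j b) m]

lemma triangle_sum {M : Type*} [AddCommMonoid M] (N : ℕ) (F : ℕ → ℕ → M) :
    ∑ m ∈ Finset.range (N + 1), ∑ i ∈ Finset.range (m + 1), F i (m - i) =
      ∑ p ∈ (Finset.range (N + 1) ×ˢ Finset.range (N + 1)).filter
        (fun p => p.1 + p.2 ≤ N), F p.1 p.2 := by
  rw [Finset.sum_sigma']
  refine Finset.sum_nbij' (fun x => (x.2, x.1 - x.2)) (fun p => ⟨p.1 + p.2, p.1⟩)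
    ?_ ?_ ?_ ?_ ?_
  · rintro ⟨m, i⟩ hx
    simp only [Finset.mem_sigma, Finset.mem_range] at hx
    simp only [Finset.mem_filter, Finset.mem_product, Finset.mem_range]
    omega
  · rintro ⟨i, j⟩ hp
    simp only [Finset.mem_filter, Finset.mem_product, Finset.mem_range] at hp
    simp only [Finset.mem_sigma, Finset.mem_range]
    omega
  · rintro ⟨m, i⟩ hx
    simp only [Finset.mem_sigma, Finset.mem_range] at hx
    show (⟨i + (m - i), i⟩ : (_ : ℕ) × ℕ) = ⟨m, i⟩
    have h : i + (m - i) = m := by omega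
    rw [h]
  · rintro ⟨i, j⟩ hp
    show ((i, i + j - i) : ℕ × ℕ) = (i, j)
    have h : i + j - i = j := by omega
    rw [h]
  · rintro ⟨m, i⟩ hx
    rfl

end Aux

/-- In an ℕ-graded connected bialgebra `H` over a field of characteristic zero, the
exponential `e^Z` of an infinitesimal character `Z`, given on every element `h` of degree at
most `N` by the (finite) sum `e^Z(h) = Σ_{m=0}^{N} (1/m!) ⟨Z^{*m}, h⟩` (whose `m = 0` term is
`ε(h)`, higher terms vanishing), is a well-defined `k`-linear map and is a character of `H`:
it is nonzero and multiplicative (in particular `e^Z(1) = 1`). -/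
theorem exp_of_infinitesimal_character_is_character
    {R H : Type*} [Field R] [CharZero R] [Ring H] [Bialgebra R H]
    (𝒜 : ℕ → Submodule R H)
    (hdirect : DirectSum.IsInternal 𝒜)
    (hmul : ∀ (p q : ℕ), ∀ a ∈ 𝒜 p, ∀ b ∈ 𝒜 q, a * b ∈ 𝒜 (p + q))
    (hcomul : ∀ n : ℕ, ∀ x ∈ 𝒜 n,
      Coalgebra.comul (R := R) x ∈
        ⨆ (p : ℕ × ℕ) (_ : p.1 + p.2 = n), tensorSub (𝒜 p.1) (𝒜 p.2))
    (hconn : 𝒜 0 = Submodule.span R {(1 : H)})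
    (Z : H →ₗ[R] R) (hZ : IsInfinitesimalCharacter Z) :
    ∃ f : H →ₗ[R] R,
      (∀ (N : ℕ) (h : H), h ∈ (⨆ (p : ℕ) (_ : p ≤ N), 𝒜 p) →
        f h = ∑ m ∈ Finset.range (N + 1), ((Nat.factorial m : R))⁻¹ * convPow Z m h) ∧
      f ≠ 0 ∧ (∀ a b : H, f (a * b) = f a * f b) ∧ f 1 = 1 := by
  classical
  have hZ1 : Z 1 = 0 := by
    have h := hZ 1 1
    simp only [mul_one, Bialgebra.counit_one, one_mul] at h
    exact (left_eq_add.mp h)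
  -- vanishing of high convolution powers on low degrees
  have van : ∀ m n, n < m → ∀ h ∈ 𝒜 n, convPow Z m h = 0 := by
    intro m
    induction m with
    | zero => intro n hn; omega
    | succ m ih =>
      intro n hn h hh
      have h0 : convPow Z (m + 1) h =
          (LinearMap.mul' R R ∘ₗ TensorProduct.map Z (convPow Z m)) (Coalgebra.comul h) :=
        rfl
      rw [h0]
      have hker : (⨆ (p : ℕ × ℕ) (_ : p.1 + p.2 = n), tensorSub (𝒜 p.1) (𝒜 p.2)) ≤
          LinearMap.ker (LinearMap.mul' R R ∘ₗ TensorProduct.map Z (convPow Z m)) := by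
        apply iSup_le; intro p; apply iSup_le; intro hpn
        rw [tensorSub, Submodule.span_le]
        rintro z ⟨a, ha, b, hb, rfl⟩
        simp only [SetLike.mem_coe, LinearMap.mem_ker, LinearMap.comp_apply,
          TensorProduct.map_tmul, LinearMap.mul'_apply]
        rcases Nat.eq_zero_or_pos p.1 with h1 | h1
        · rw [h1, hconn] at ha
          obtain ⟨r, rfl⟩ := Submodule.mem_span_singleton.mp ha
          rw [map_smul, smul_eq_mul, hZ1, mul_zero, zero_mul]
        · have hb2 : p.2 < m := by omega
          rw [ih p.2 hb2 b hb, mul_zero]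
      exact LinearMap.mem_ker.mp (hker (hcomul n h hh))
  -- definition of f
  let φ : ∀ n : ℕ, 𝒜 n →ₗ[R] R := fun n =>
    (∑ m ∈ Finset.range (n + 1), (((Nat.factorial m : R))⁻¹ • convPow Z m)) ∘ₗ (𝒜 n).subtype
  let g : (⨁ n, 𝒜 n) →ₗ[R] R := DirectSum.toModule R ℕ R φ
  let e : (⨁ n, 𝒜 n) ≃ₗ[R] H := LinearEquiv.ofBijective (DirectSum.coeLinearMap 𝒜) hdirect
  let f : H →ₗ[R] R := g ∘ₗ (e.symm : H →ₗ[R] (⨁ n, 𝒜 n))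
  have f_hom : ∀ n (h : H) (hh : h ∈ 𝒜 n),
      f h = ∑ m ∈ Finset.range (n + 1), ((Nat.factorial m : R))⁻¹ * convPow Z m h := by
    intro n h hh
    have he : e.symm h = DirectSum.lof R ℕ (fun n => 𝒜 n) n ⟨h, hh⟩ := by
      rw [LinearEquiv.symm_apply_eq]
      show h = DirectSum.coeLinearMap 𝒜 (DirectSum.lof R ℕ (fun n => 𝒜 n) n ⟨h, hh⟩)
      rw [DirectSum.lof_eq_of, DirectSum.coeLinearMap_of]
    show g (e.symm h) = _
    rw [he]
    show DirectSum.toModule R ℕ R φ (DirectSum.lof R ℕ (fun n => 𝒜 n) n ⟨h, hh⟩) = _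
    rw [DirectSum.toModule_lof]
    simp only [φ, LinearMap.comp_apply, LinearMap.sum_apply, LinearMap.smul_apply,
      Submodule.subtype_apply, smul_eq_mul]
  have f_formula : ∀ (N : ℕ) (h : H), h ∈ (⨆ (p : ℕ) (_ : p ≤ N), 𝒜 p) →
      f h = ∑ m ∈ Finset.range (N + 1), ((Nat.factorial m : R))⁻¹ * convPow Z m h := by
    intro N h hh
    have hker : (⨆ (p : ℕ) (_ : p ≤ N), 𝒜 p) ≤ LinearMap.ker
        (f - ∑ m ∈ Finset.range (N + 1), ((Nat.factorial m : R))⁻¹ • convPow Z m) := by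
      apply iSup_le; intro p; apply iSup_le; intro hpN
      intro x hx
      simp only [LinearMap.mem_ker, LinearMap.sub_apply, LinearMap.sum_apply,
        LinearMap.smul_apply, smul_eq_mul, sub_eq_zero]
      rw [f_hom p x hx]
      apply Finset.sum_subset
      · exact Finset.range_subset_range.mpr (by omega)
      · intro m hm1 hm2
        have : p < m := by
          simp only [Finset.mem_range] at hm1 hm2; omega
        rw [van m p this x hx, mul_zero]
    have := hker hh
    simp only [LinearMap.mem_ker, LinearMap.sub_apply, LinearMap.sum_apply,
      LinearMap.smul_apply, smul_eq_mul, sub_eq_zero] at this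
    exact this
  have h1mem : (1 : H) ∈ 𝒜 0 := by
    rw [hconn]; exact Submodule.mem_span_singleton_self 1
  have f1 : f 1 = 1 := by
    rw [f_hom 0 1 h1mem]
    simp [convPow]
  have hfac : ∀ {i m : ℕ}, i ≤ m →
      ((Nat.factorial m : R))⁻¹ * (m.choose i : R) =
        ((Nat.factorial i : R))⁻¹ * ((Nat.factorial (m - i) : R))⁻¹ := by
    intro i m him
    have key := Nat.choose_mul_factorial_mul_factorial him
    have hcast : (m.choose i : R) * (Nat.factorial i : R) * (Nat.factorial (m - i) : R) =
        (Nat.factorial m : R) := by exact_mod_cast congrArg Nat.cast key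
    have h1 : (Nat.factorial i : R) ≠ 0 := Nat.cast_ne_zero.mpr (Nat.factorial_ne_zero i)
    have h2 : (Nat.factorial (m - i) : R) ≠ 0 := Nat.cast_ne_zero.mpr (Nat.factorial_ne_zero _)
    have h3 : (Nat.factorial m : R) ≠ 0 := Nat.cast_ne_zero.mpr (Nat.factorial_ne_zero m)
    field_simp
    linear_combination hcast
  have hom_mul : ∀ p q, ∀ a ∈ 𝒜 p, ∀ b ∈ 𝒜 q, f (a * b) = f a * f b := by
    intro p q a ha b hb
    have hab : a * b ∈ 𝒜 (p + q) := hmul p q a ha b hb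
    set N := p + q with hN
    have hu : ∀ i, p < i → convPow Z i a = 0 := fun i hi => van i p hi a ha
    have hv : ∀ j, q < j → convPow Z j b = 0 := fun j hj => van j q hj b hb
    have fa : f a = ∑ i ∈ Finset.range (N + 1), ((Nat.factorial i : R))⁻¹ * convPow Z i a := by
      rw [f_hom p a ha]
      apply Finset.sum_subset (Finset.range_subset_range.mpr (by omega))
      intro m hm1 hm2
      rw [hu m (by simp only [Finset.mem_range] at hm2; omega), mul_zero]
    have fb : f b = ∑ j ∈ Finset.range (N + 1), ((Nat.factorial j : R))⁻¹ * convPow Z j b := by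
      rw [f_hom q b hb]
      apply Finset.sum_subset (Finset.range_subset_range.mpr (by omega))
      intro m hm1 hm2
      rw [hv m (by simp only [Finset.mem_range] at hm2; omega), mul_zero]
    rw [f_hom N (a * b) hab, fa, fb, Finset.sum_mul_sum]
    have lhs : ∑ m ∈ Finset.range (N + 1), ((Nat.factorial m : R))⁻¹ * convPow Z m (a * b) =
        ∑ m ∈ Finset.range (N + 1), ∑ i ∈ Finset.range (m + 1),
          (((Nat.factorial i : R))⁻¹ * ((Nat.factorial (m - i) : R))⁻¹) * (convPow Z i a * convPow Z (m - i) b) := by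
      apply Finset.sum_congr rfl
      intro m _
      rw [convPow_mul Z hZ m a b, Finset.mul_sum]
      apply Finset.sum_congr rfl
      intro i hi
      rw [← mul_assoc, hfac (Nat.lt_succ_iff.mp (Finset.mem_range.mp hi))]
    rw [lhs,
      triangle_sum N (fun i j => (((Nat.factorial i : R))⁻¹ * ((Nat.factorial j : R))⁻¹) *
        (convPow Z i a * convPow Z j b))]
    rw [Finset.sum_filter_of_ne (by
      rintro ⟨i, j⟩ hij hne
      simp only at hne ⊢
      by_contra hgt
      apply hne
      rcases (by omega : p < i ∨ q < j) with h | h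
      · rw [hu i h]; ring
      · rw [hv j h]; ring)]
    rw [Finset.sum_product]
    apply Finset.sum_congr rfl
    intro i _
    apply Finset.sum_congr rfl
    intro j _
    ring
  have htop : iSup 𝒜 = ⊤ := hdirect.submodule_iSup_eq_top
  have mul_all : ∀ a b : H, f (a * b) = f a * f b := by
    have step1 : ∀ q, ∀ b ∈ 𝒜 q, ∀ a, f (a * b) = f a * f b := by
      intro q b hb a
      have hker : (⊤ : Submodule R H) ≤
          LinearMap.ker (f ∘ₗ LinearMap.mulRight R b - f b • f) := by
        rw [← htop]
        apply iSup_le; intro p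
        intro x hx
        simp only [LinearMap.mem_ker, LinearMap.sub_apply, LinearMap.comp_apply,
          LinearMap.mulRight_apply, LinearMap.smul_apply, smul_eq_mul, sub_eq_zero]
        linear_combination hom_mul p q x hx b hb
      have := hker (Submodule.mem_top (x := a))
      simp only [LinearMap.mem_ker, LinearMap.sub_apply, LinearMap.comp_apply,
        LinearMap.mulRight_apply, LinearMap.smul_apply, smul_eq_mul, sub_eq_zero] at this
      linear_combination this
    intro a b
    have hker : (⊤ : Submodule R H) ≤
        LinearMap.ker (f ∘ₗ LinearMap.mulLeft R a - f a • f) := by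
      rw [← htop]
      apply iSup_le; intro q
      intro x hx
      simp only [LinearMap.mem_ker, LinearMap.sub_apply, LinearMap.comp_apply,
        LinearMap.mulLeft_apply, LinearMap.smul_apply, smul_eq_mul, sub_eq_zero]
      linear_combination step1 q x hx a
    have := hker (Submodule.mem_top (x := b))
    simp only [LinearMap.mem_ker, LinearMap.sub_apply, LinearMap.comp_apply,
      LinearMap.mulLeft_apply, LinearMap.smul_apply, smul_eq_mul, sub_eq_zero] at this
    linear_combination this
  refine ⟨f, f_formula, ?_, mul_all, f1⟩
  intro hf0
  have : (0 : R) = 1 := by rw [← f1, hf0]; rfl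
  exact zero_ne_one this
end

section
/- Let H be a CMK Hopf algebra over k, let Z_1,…,Z_n (n≥1) be infinitesimal characters of H with restrictions φ_j = Z_j|_V to V, and let x_{i_1},…,x_{i_n} be basis elements of V. Then the n-fold convolution product satisfies ⟨Z_1 * ⋯ * Z_n, x_{i_1}⋯x_{i_n}⟩ = Σ_{σ∈S_n} φ_{σ(1)}(x_{i_1})·φ_{σ(2)}(x_{i_2})⋯φ_{σ(n)}(x_{i_n}), the sum running over all permutations σ of {1,…,n}. -/
open TensorProduct

/-- The subspace `V` of `H` spanned by the generators `xᵢ`. -/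
noncomputable def genSpan (R : Type*) {H : Type*} [CommSemiring R] [AddCommMonoid H]
    [Module R H] (x : ℕ → H) : Submodule R H :=
  Submodule.span R (Set.range x)

/-! ### Auxiliary material for the proof -/

namespace CMKAux

/-- The insertion of a value `j₀` at position `0`: the permutation of `Fin (n+1)` sending
`0` to `j₀` and `i.succ` to `j₀.succAbove (τ i)`. -/
def insEquiv {n : ℕ} (j₀ : Fin (n + 1)) (τ : Equiv.Perm (Fin n)) : Equiv.Perm (Fin (n + 1)) :=
  ((finSuccEquiv n).trans (Equiv.optionCongr τ)).trans (finSuccEquiv' j₀).symm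

@[simp] lemma insEquiv_zero {n : ℕ} (j₀ : Fin (n + 1)) (τ : Equiv.Perm (Fin n)) :
    insEquiv j₀ τ 0 = j₀ := by
  simp [insEquiv]

@[simp] lemma insEquiv_succ {n : ℕ} (j₀ : Fin (n + 1)) (τ : Equiv.Perm (Fin n)) (i : Fin n) :
    insEquiv j₀ τ i.succ = j₀.succAbove (τ i) := by
  simp [insEquiv]

lemma insEquiv_bijective (n : ℕ) :
    Function.Bijective
      (fun p : Fin (n + 1) × Equiv.Perm (Fin n) => insEquiv p.1 p.2) := by
  rw [Fintype.bijective_iff_injective_and_card]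
  constructor
  · intro p q h
    have h0 : p.1 = q.1 := by
      have := congrArg (fun e : Equiv.Perm (Fin (n + 1)) => e 0) h
      simpa using this
    have h1 : p.2 = q.2 := by
      ext i
      have := congrArg (fun e : Equiv.Perm (Fin (n + 1)) => e i.succ) h
      simp only [insEquiv_succ, h0] at this
      exact congrArg Fin.val (Fin.succAbove_right_injective this)
    exact Prod.ext h0 h1
  · simp [Fintype.card_perm, Nat.factorial_succ]

variable {R H : Type*} [CommRing R] [CommRing H] [Bialgebra R H]

/-- The augmentation ideal (kernel of the counit). -/
noncomputable def Jid (R H : Type*) [CommRing R] [CommRing H] [Bialgebra R H] : Ideal H :=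
  RingHom.ker (Bialgebra.counitAlgHom R H)

/-- Powers of the augmentation ideal, as `R`-submodules. -/
noncomputable def Jp (R H : Type*) [CommRing R] [CommRing H] [Bialgebra R H] (k : ℕ) :
    Submodule R H :=
  Submodule.restrictScalars R (Jid R H ^ k)

lemma mem_Jid {a : H} : a ∈ Jid R H ↔ Coalgebra.counit (R := R) a = 0 := by
  simp [Jid, RingHom.mem_ker, Bialgebra.counitAlgHom]

lemma mem_Jp_one {h : H} : h ∈ Jp R H 1 ↔ Coalgebra.counit (R := R) h = 0 := by
  rw [Jp, Submodule.restrictScalars_mem, pow_one, mem_Jid]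

lemma mem_Jp_zero (h : H) : h ∈ Jp R H 0 := by
  rw [Jp, Submodule.restrictScalars_mem, pow_zero, Ideal.one_eq_top]
  trivial

lemma Jp_mul_mem {p q : ℕ} {a b : H} (ha : a ∈ Jp R H p) (hb : b ∈ Jp R H q) :
    a * b ∈ Jp R H (p + q) := by
  rw [Jp, Submodule.restrictScalars_mem, pow_add]
  exact Submodule.mul_mem_mul ha hb

lemma Jp_anti {p q : ℕ} (h : p ≤ q) : Jp R H q ≤ Jp R H p := fun x hx =>
  Ideal.pow_le_pow_right h hx

lemma Jp_mul_right {k : ℕ} {a : H} (ha : a ∈ Jp R H k) (b : H) : a * b ∈ Jp R H k :=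
  Ideal.mul_mem_right b _ ha

lemma Jp_mul_left {k : ℕ} {a : H} (ha : a ∈ Jp R H k) (b : H) : b * a ∈ Jp R H k :=
  Ideal.mul_mem_left _ b ha

/-! ### tensorSub lemmas -/

lemma tmul_mem_tensorSub {A B : Submodule R H} {a b : H} (ha : a ∈ A) (hb : b ∈ B) :
    a ⊗ₜ[R] b ∈ tensorSub A B :=
  Submodule.subset_span ⟨a, ha, b, hb, rfl⟩

lemma tensorSub_mono {A A' B B' : Submodule R H} (hA : A ≤ A') (hB : B ≤ B') :
    tensorSub A B ≤ tensorSub A' B' := by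
  apply Submodule.span_mono
  rintro z ⟨a, ha, b, hb, rfl⟩
  exact ⟨a, hA ha, b, hB hb, rfl⟩

lemma mul_mem_tensorSub {A B C D A' B' : Submodule R H}
    {z w : H ⊗[R] H} (hz : z ∈ tensorSub A B) (hw : w ∈ tensorSub C D)
    (hAC : ∀ a ∈ A, ∀ c ∈ C, a * c ∈ A') (hBD : ∀ b ∈ B, ∀ d ∈ D, b * d ∈ B') :
    z * w ∈ tensorSub A' B' := by
  induction hz using Submodule.span_induction with
  | mem z hzz =>
    obtain ⟨a, ha, b, hb, rfl⟩ := hzz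
    induction hw using Submodule.span_induction with
    | mem w hww =>
      obtain ⟨c, hc, d, hd, rfl⟩ := hww
      rw [Algebra.TensorProduct.tmul_mul_tmul]
      exact tmul_mem_tensorSub (hAC _ ha _ hc) (hBD _ hb _ hd)
    | zero => rw [mul_zero]; exact zero_mem _
    | add w₁ w₂ _ _ h1 h2 => rw [mul_add]; exact add_mem h1 h2
    | smul r w _ h => rw [Algebra.mul_smul_comm]; exact Submodule.smul_mem _ _ h
  | zero => rw [zero_mul]; exact zero_mem _
  | add z₁ z₂ _ _ h1 h2 => rw [add_mul]; exact add_mem h1 h2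
  | smul r z _ h => rw [Algebra.smul_mul_assoc]; exact Submodule.smul_mem _ _ h

/-! ### Evaluation of functionals on tensors -/

/-- Evaluation `⟨ξ ⊗ η, -⟩` on `H ⊗ H`. -/
noncomputable def ev (ξ η : H →ₗ[R] R) : H ⊗[R] H →ₗ[R] R :=
  LinearMap.mul' R R ∘ₗ TensorProduct.map ξ η

lemma conv_apply (ξ η : H →ₗ[R] R) (h : H) :
    conv ξ η h = ev ξ η (Coalgebra.comul (R := R) h) := rfl

lemma ev_tmul (ξ η : H →ₗ[R] R) (a b : H) : ev ξ η (a ⊗ₜ[R] b) = ξ a * η b := by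
  simp [ev]

lemma ev_zero_left {A B : Submodule R H} {ξ η : H →ₗ[R] R}
    (hξ : ∀ a ∈ A, ξ a = 0) {z : H ⊗[R] H} (hz : z ∈ tensorSub A B) :
    ev ξ η z = 0 := by
  induction hz using Submodule.span_induction with
  | mem z hzz =>
    obtain ⟨a, ha, b, hb, rfl⟩ := hzz
    rw [ev_tmul, hξ a ha, zero_mul]
  | zero => rw [map_zero]
  | add z₁ z₂ _ _ h1 h2 => rw [map_add, h1, h2, add_zero]
  | smul r z _ h => rw [map_smul, h, smul_zero]

lemma ev_zero_right {A B : Submodule R H} {ξ η : H →ₗ[R] R}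
    (hη : ∀ b ∈ B, η b = 0) {z : H ⊗[R] H} (hz : z ∈ tensorSub A B) :
    ev ξ η z = 0 := by
  induction hz using Submodule.span_induction with
  | mem z hzz =>
    obtain ⟨a, ha, b, hb, rfl⟩ := hzz
    rw [ev_tmul, hη b hb, mul_zero]
  | zero => rw [map_zero]
  | add z₁ z₂ _ _ h1 h2 => rw [map_add, h1, h2, add_zero]
  | smul r z _ h => rw [map_smul, h, smul_zero]

/-! ### Infinitesimal characters -/

lemma char_one {Z : H →ₗ[R] R} (hZ : IsInfinitesimalCharacter Z) : Z 1 = 0 := by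
  have h := hZ 1 1
  rw [mul_one, Bialgebra.counit_one, mul_one, one_mul] at h
  have h2 : Z 1 + Z 1 = Z 1 + 0 := by rw [add_zero]; exact h.symm
  exact (add_left_cancel h2)

lemma char_kills_Jp {Z : H →ₗ[R] R} (hZ : IsInfinitesimalCharacter Z) {k : ℕ} (hk : 2 ≤ k) :
    ∀ h ∈ Jp R H k, Z h = 0 := by
  intro h hh
  have h2 : h ∈ Jp R H 2 := Jp_anti hk hh
  rw [Jp, Submodule.restrictScalars_mem, pow_two] at h2
  refine Submodule.mul_induction_on h2 ?_ ?_
  · intro a ha b hb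
    rw [hZ a b, mem_Jid.mp ha, mem_Jid.mp hb, mul_zero, zero_mul, add_zero]
  · intro x y hx hy
    rw [map_add, hx, hy, add_zero]

/-! ### The primitive-residue lemma -/

lemma comul_sub_mem {u : H} (hu : Coalgebra.counit (R := R) u = 0) :
    Coalgebra.comul (R := R) u - u ⊗ₜ[R] (1 : H) - (1 : H) ⊗ₜ[R] u
      ∈ tensorSub (Jp R H 1) (Jp R H 1) := by
  set ε : H →ₗ[R] R := Coalgebra.counit with hε
  set η : R →ₗ[R] H := Algebra.linearMap R H with hη
  set π : H →ₗ[R] H := LinearMap.id - η ∘ₗ ε with hπ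
  have hπ_apply : ∀ h : H, π h = h - algebraMap R H (ε h) := by
    intro h; simp [hπ, hη]
  have hπmem : ∀ h : H, π h ∈ Jp R H 1 := by
    intro h
    rw [mem_Jp_one, hπ_apply]
    rw [map_sub]
    rw [show Coalgebra.counit (R := R) (algebraMap R H (ε h)) = ε h from
      Bialgebra.counit_algebraMap (ε h)]
    exact sub_self _
  have key : ∀ z : H ⊗[R] H, TensorProduct.map π π z ∈ tensorSub (Jp R H 1) (Jp R H 1) := by
    intro z
    induction z using TensorProduct.induction_on with
    | zero => rw [map_zero]; exact zero_mem _
    | tmul a b => exact tmul_mem_tensorSub (hπmem a) (hπmem b)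
    | add x y hx hy => rw [map_add]; exact add_mem hx hy
  have step1 : LinearMap.lTensor H π (Coalgebra.comul (R := R) u)
      = Coalgebra.comul (R := R) u - u ⊗ₜ[R] (1 : H) := by
    rw [hπ, LinearMap.lTensor_sub, LinearMap.sub_apply, LinearMap.lTensor_id,
      LinearMap.id_apply, LinearMap.lTensor_comp, LinearMap.comp_apply]
    rw [show (LinearMap.lTensor H ε) (Coalgebra.comul (R := R) u) = u ⊗ₜ[R] (1 : R) from
      Coalgebra.lTensor_counit_comul u]
    rw [LinearMap.lTensor_tmul]
    congr 2
    simp [hη]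
  have step2 : LinearMap.rTensor H π (Coalgebra.comul (R := R) u)
      = Coalgebra.comul (R := R) u - (1 : H) ⊗ₜ[R] u := by
    rw [hπ, LinearMap.rTensor_sub, LinearMap.sub_apply, LinearMap.rTensor_id,
      LinearMap.id_apply, LinearMap.rTensor_comp, LinearMap.comp_apply]
    rw [show (LinearMap.rTensor H ε) (Coalgebra.comul (R := R) u) = (1 : R) ⊗ₜ[R] u from
      Coalgebra.rTensor_counit_comul u]
    rw [LinearMap.rTensor_tmul]
    congr 2
    simp [hη]
  have hπu : π u = u := by
    rw [hπ_apply]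
    rw [show Coalgebra.counit (R := R) u = 0 from hu, map_zero, sub_zero]
  have step3 : LinearMap.rTensor H π (u ⊗ₜ[R] (1 : H)) = u ⊗ₜ[R] (1 : H) := by
    rw [LinearMap.rTensor_tmul, hπu]
  have calc1 : TensorProduct.map π π (Coalgebra.comul (R := R) u)
      = Coalgebra.comul (R := R) u - u ⊗ₜ[R] (1 : H) - (1 : H) ⊗ₜ[R] u := by
    rw [← LinearMap.rTensor_comp_lTensor, LinearMap.comp_apply, step1, map_sub, step2, step3]
    abel
  rw [← calc1]
  exact key _

/-! ### Filtration of the comultiplication -/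

lemma comul_mem_D (m : ℕ) : ∀ h ∈ Jp R H (m + 1),
    Coalgebra.comul (R := R) h ∈
      tensorSub (⊤ : Submodule R H) (Jp R H (m + 1)) ⊔ tensorSub (Jp R H 1) (Jp R H m)
        ⊔ tensorSub (Jp R H 2) (⊤ : Submodule R H) := by
  induction m with
  | zero =>
    intro h hh
    have hs := comul_sub_mem (mem_Jp_one.mp hh)
    have hEq : Coalgebra.comul (R := R) h
        = (Coalgebra.comul (R := R) h - h ⊗ₜ[R] (1 : H) - (1 : H) ⊗ₜ[R] h)
          + h ⊗ₜ[R] (1 : H) + (1 : H) ⊗ₜ[R] h := by abel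
    rw [hEq]
    refine add_mem (add_mem ?_ ?_) ?_
    · exact Submodule.mem_sup_left (Submodule.mem_sup_right
        ((tensorSub_mono le_rfl (fun x _ => mem_Jp_zero x)) hs))
    · exact Submodule.mem_sup_left (Submodule.mem_sup_right
        (tmul_mem_tensorSub hh (mem_Jp_zero (1 : H))))
    · exact Submodule.mem_sup_left (Submodule.mem_sup_left
        (tmul_mem_tensorSub Submodule.mem_top hh))
  | succ m ih =>
    intro h hh
    have hh' : h ∈ Submodule.restrictScalars R (Jid R H ^ (m + 1) * Jid R H) := by
      rw [Submodule.restrictScalars_mem, ← pow_succ]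
      exact hh
    rw [Submodule.restrictScalars_mem] at hh'
    refine Submodule.mul_induction_on hh' ?_ ?_
    · intro a ha b hb
      have hΔa := ih a ha
      rcases Submodule.mem_sup.mp hΔa with ⟨w, hw, z3, hz3, hEqa⟩
      rcases Submodule.mem_sup.mp hw with ⟨z1, hz1, z2, hz2, rfl⟩
      have hεb : Coalgebra.counit (R := R) b = 0 := mem_Jid.mp hb
      have hb1 : b ∈ Jp R H 1 := mem_Jp_one.mpr hεb
      set s : H ⊗[R] H := Coalgebra.comul (R := R) b - b ⊗ₜ[R] (1 : H) - (1 : H) ⊗ₜ[R] b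
        with hsdef
      have hs : s ∈ tensorSub (Jp R H 1) (Jp R H 1) := comul_sub_mem hεb
      have hΔb : Coalgebra.comul (R := R) b = b ⊗ₜ[R] (1 : H) + (1 : H) ⊗ₜ[R] b + s := by
        rw [hsdef]; abel
      have hexp : Coalgebra.comul (R := R) (a * b)
          = z1 * (b ⊗ₜ[R] (1 : H)) + z1 * ((1 : H) ⊗ₜ[R] b) + z1 * s
            + (z2 * (b ⊗ₜ[R] (1 : H)) + z2 * ((1 : H) ⊗ₜ[R] b) + z2 * s)
            + (z3 * (b ⊗ₜ[R] (1 : H)) + z3 * ((1 : H) ⊗ₜ[R] b) + z3 * s) := by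
        rw [Bialgebra.comul_mul, ← hEqa, hΔb]; ring
      rw [hexp]
      have memb1 : b ⊗ₜ[R] (1 : H) ∈ tensorSub (Jp R H 1) (⊤ : Submodule R H) :=
        tmul_mem_tensorSub hb1 Submodule.mem_top
      have memb2 : (1 : H) ⊗ₜ[R] b ∈ tensorSub (⊤ : Submodule R H) (Jp R H 1) :=
        tmul_mem_tensorSub Submodule.mem_top hb1
      refine add_mem (add_mem ?_ ?_) ?_
      · -- z1 terms; z1 ∈ tensorSub ⊤ (Jp (m+1))
        refine add_mem (add_mem ?_ ?_) ?_
        · -- z1 * (b ⊗ 1) : left ⊤*Jp1 ⊆ Jp1, right Jp(m+1)*⊤ ⊆ Jp(m+1)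
          exact Submodule.mem_sup_left (Submodule.mem_sup_right
            (mul_mem_tensorSub hz1 memb1 (fun x _ c hc => Jp_mul_left hc x)
              (fun x hx d _ => Jp_mul_right hx d)))
        · -- z1 * (1 ⊗ b) : left ⊤, right Jp(m+1)*Jp1 = Jp(m+2)
          exact Submodule.mem_sup_left (Submodule.mem_sup_left
            (mul_mem_tensorSub hz1 memb2 (fun x _ c _ => Submodule.mem_top)
              (fun x hx d hd => Jp_mul_mem hx hd)))
        · -- z1 * s : left Jp1, right Jp(m+1)*Jp1 ⊆ Jp(m+1)
          exact Submodule.mem_sup_left (Submodule.mem_sup_right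
            (mul_mem_tensorSub hz1 hs (fun x _ c hc => Jp_mul_left hc x)
              (fun x hx d _ => Jp_mul_right hx d)))
      · -- z2 terms; z2 ∈ tensorSub (Jp 1) (Jp m)
        refine add_mem (add_mem ?_ ?_) ?_
        · -- z2 * (b ⊗ 1) : Jp1*Jp1 = Jp2, ⊤
          exact Submodule.mem_sup_right
            (mul_mem_tensorSub hz2 memb1 (fun x hx c hc => Jp_mul_mem hx hc)
              (fun x _ d _ => Submodule.mem_top))
        · -- z2 * (1 ⊗ b) : left Jp1*⊤ ⊆ Jp1, right Jpm*Jp1 = Jp(m+1)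
          exact Submodule.mem_sup_left (Submodule.mem_sup_right
            (mul_mem_tensorSub hz2 memb2 (fun x hx c _ => Jp_mul_right hx c)
              (fun x hx d hd => Jp_mul_mem hx hd)))
        · -- z2 * s : Jp2, ⊤
          exact Submodule.mem_sup_right
            (mul_mem_tensorSub hz2 hs (fun x hx c hc => Jp_mul_mem hx hc)
              (fun x _ d _ => Submodule.mem_top))
      · -- z3 terms; z3 ∈ tensorSub (Jp 2) ⊤, everything stays there
        have memb1' : b ⊗ₜ[R] (1 : H) ∈ tensorSub (⊤ : Submodule R H) (⊤ : Submodule R H) :=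
          tmul_mem_tensorSub Submodule.mem_top Submodule.mem_top
        have memb2' : (1 : H) ⊗ₜ[R] b ∈ tensorSub (⊤ : Submodule R H) (⊤ : Submodule R H) :=
          tmul_mem_tensorSub Submodule.mem_top Submodule.mem_top
        have hs' : s ∈ tensorSub (⊤ : Submodule R H) (⊤ : Submodule R H) :=
          tensorSub_mono (fun x _ => Submodule.mem_top) (fun x _ => Submodule.mem_top) hs
        refine add_mem (add_mem ?_ ?_) ?_
        · exact Submodule.mem_sup_right
            (mul_mem_tensorSub hz3 memb1' (fun x hx c _ => Jp_mul_right hx c)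
              (fun x _ d _ => Submodule.mem_top))
        · exact Submodule.mem_sup_right
            (mul_mem_tensorSub hz3 memb2' (fun x hx c _ => Jp_mul_right hx c)
              (fun x _ d _ => Submodule.mem_top))
        · exact Submodule.mem_sup_right
            (mul_mem_tensorSub hz3 hs' (fun x hx c _ => Jp_mul_right hx c)
              (fun x _ d _ => Submodule.mem_top))
    · intro x y hx hy
      rw [map_add]
      exact add_mem hx hy

/-! ### Vanishing of iterated convolutions on high powers of the augmentation ideal -/

lemma convFam_vanish : ∀ (n : ℕ) (Z : Fin n → (H →ₗ[R] R)),
    (∀ j, IsInfinitesimalCharacter (Z j)) →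
    ∀ h ∈ Jp R H (n + 1), convFam n Z h = 0 := by
  intro n
  induction n with
  | zero =>
    intro Z _ h hh
    exact mem_Jp_one.mp hh
  | succ n ih =>
    intro Z hZ h hh
    have hD := comul_mem_D (n + 1) h hh
    rcases Submodule.mem_sup.mp hD with ⟨w, hw, d3, hd3, hEq⟩
    rcases Submodule.mem_sup.mp hw with ⟨d1, hd1, d2, hd2, rfl⟩
    have hL : convFam (n + 1) Z h
        = ev (Z 0) (convFam n (fun i => Z i.succ)) (Coalgebra.comul (R := R) h) := rfl
    have W0 : ∀ b ∈ Jp R H (n + 1), convFam n (fun i => Z i.succ) b = 0 :=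
      ih _ (fun j => hZ j.succ)
    rw [hL, ← hEq, map_add, map_add]
    rw [ev_zero_right (fun b hb => W0 b (Jp_anti (Nat.le_succ _) hb)) hd1]
    rw [ev_zero_right W0 hd2]
    rw [ev_zero_left (char_kills_Jp (hZ 0) le_rfl) hd3]
    ring

/-! ### Products of elements of the augmentation ideal -/

lemma prod_mem_Jp : ∀ (m : ℕ) (y : Fin m → H), (∀ j, y j ∈ Jp R H 1) →
    (∏ j, y j) ∈ Jp R H m := by
  intro m
  induction m with
  | zero =>
    intro y _
    exact mem_Jp_zero _
  | succ m ih =>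
    intro y hy
    rw [Fin.prod_univ_succ]
    have := Jp_mul_mem (hy 0) (ih (fun i => y i.succ) (fun i => hy i.succ))
    rwa [add_comm] at this

/-! ### The key structural lemma for comultiplication of products -/

lemma comul_prod : ∀ (m : ℕ) (y : Fin (m + 1) → H), (∀ j, y j ∈ Jp R H 1) →
    Coalgebra.comul (R := R) (∏ j, y j) - (1 : H) ⊗ₜ[R] (∏ j, y j)
      - ∑ j : Fin (m + 1), (y j) ⊗ₜ[R] (∏ i : Fin m, y (j.succAbove i))
    ∈ tensorSub (Jp R H 2) (⊤ : Submodule R H) ⊔ tensorSub (Jp R H 1) (Jp R H (m + 1)) := by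
  intro m
  induction m with
  | zero =>
    intro y hy
    have hs := comul_sub_mem (mem_Jp_one.mp (hy 0))
    have hEq : Coalgebra.comul (R := R) (∏ j, y j) - (1 : H) ⊗ₜ[R] (∏ j, y j)
        - ∑ j : Fin 1, (y j) ⊗ₜ[R] (∏ i : Fin 0, y (j.succAbove i))
        = Coalgebra.comul (R := R) (y 0) - y 0 ⊗ₜ[R] (1 : H) - (1 : H) ⊗ₜ[R] (y 0) := by
      rw [Fin.prod_univ_one, Fin.sum_univ_one]
      rw [show (∏ i : Fin 0, y ((0 : Fin 1).succAbove i)) = (1 : H) from Finset.prod_empty]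
      abel
    rw [hEq]
    exact Submodule.mem_sup_right hs
  | succ m ih =>
    intro y hy
    set u : H := y 0 with hu
    set w : Fin (m + 1) → H := fun i => y i.succ with hwdef
    have hw : ∀ i, w i ∈ Jp R H 1 := fun i => hy i.succ
    set M : H := ∏ i, w i with hM
    have hMmem : M ∈ Jp R H (m + 1) := prod_mem_Jp (m + 1) w hw
    set T : H ⊗[R] H := ∑ j : Fin (m + 1), (w j) ⊗ₜ[R] (∏ i : Fin m, w (j.succAbove i))
      with hT
    set s : H ⊗[R] H := Coalgebra.comul (R := R) u - u ⊗ₜ[R] (1 : H) - (1 : H) ⊗ₜ[R] u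
      with hsdef
    have hs : s ∈ tensorSub (Jp R H 1) (Jp R H 1) := comul_sub_mem (mem_Jp_one.mp (hy 0))
    set e : H ⊗[R] H := Coalgebra.comul (R := R) M - (1 : H) ⊗ₜ[R] M - T with hedef
    have he : e ∈ tensorSub (Jp R H 2) (⊤ : Submodule R H)
        ⊔ tensorSub (Jp R H 1) (Jp R H (m + 1)) := ih w hw
    have hPP : (∏ j : Fin (m + 2), y j) = u * M := by
      rw [Fin.prod_univ_succ]
    have hTmem : T ∈ tensorSub (Jp R H 1) (⊤ : Submodule R H) := by
      rw [hT]
      exact Submodule.sum_mem _ (fun j _ => tmul_mem_tensorSub (hw j) Submodule.mem_top)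
    have hN : (∑ j : Fin (m + 2), (y j) ⊗ₜ[R] (∏ i : Fin (m + 1), y (j.succAbove i)))
        = u ⊗ₜ[R] M + ((1 : H) ⊗ₜ[R] u) * T := by
      have hp0 : (∏ i : Fin (m + 1), y ((0 : Fin (m + 2)).succAbove i)) = M := by
        rw [hM, hwdef]
        exact Finset.prod_congr rfl (fun i _ => by rw [Fin.succAbove_zero])
      have hsum : (∑ j : Fin (m + 1), (y j.succ) ⊗ₜ[R] (∏ i : Fin (m + 1), y ((j.succ).succAbove i)))
          = ((1 : H) ⊗ₜ[R] u) * T := by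
        rw [hT, Finset.mul_sum]
        apply Finset.sum_congr rfl
        intro j _
        have hp : (∏ i : Fin (m + 1), y ((j.succ).succAbove i))
            = u * ∏ i : Fin m, w (j.succAbove i) := by
          rw [Fin.prod_univ_succ, Fin.succ_succAbove_zero, hu]
          rw [show (∏ i : Fin m, y ((j.succ).succAbove i.succ))
            = ∏ i : Fin m, w (j.succAbove i) from
            Finset.prod_congr rfl (fun i _ => by rw [Fin.succ_succAbove_succ, hwdef])]
        rw [hp, Algebra.TensorProduct.tmul_mul_tmul, one_mul, hwdef]
      rw [Fin.sum_univ_succ, hp0, hsum, hu]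
    have hcm : Coalgebra.comul (R := R) (∏ j : Fin (m + 2), y j)
        = (u ⊗ₜ[R] (1 : H) + (1 : H) ⊗ₜ[R] u + s)
          * ((1 : H) ⊗ₜ[R] M + T + e) := by
      rw [hPP, Bialgebra.comul_mul]
      congr 1
      · rw [hsdef]; abel
      · rw [hedef]; abel
    have h1 : (1 : H) ⊗ₜ[R] (u * M) = ((1 : H) ⊗ₜ[R] u) * ((1 : H) ⊗ₜ[R] M) := by
      rw [Algebra.TensorProduct.tmul_mul_tmul, one_mul]
    have h2 : u ⊗ₜ[R] M = (u ⊗ₜ[R] (1 : H)) * ((1 : H) ⊗ₜ[R] M) := by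
      rw [Algebra.TensorProduct.tmul_mul_tmul, one_mul, mul_one]
    have key : Coalgebra.comul (R := R) (∏ j : Fin (m + 2), y j)
        - (1 : H) ⊗ₜ[R] (∏ j : Fin (m + 2), y j)
        - ∑ j : Fin (m + 2), (y j) ⊗ₜ[R] (∏ i : Fin (m + 1), y (j.succAbove i))
        = (u ⊗ₜ[R] (1 : H)) * T + (u ⊗ₜ[R] (1 : H)) * e + ((1 : H) ⊗ₜ[R] u) * e
          + s * ((1 : H) ⊗ₜ[R] M) + s * T + s * e := by
      rw [hcm, hN, hPP, h1, h2]
      ring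
    rw [key]
    rcases Submodule.mem_sup.mp he with ⟨e1, he1, e2, he2, hEe⟩
    have humem : u ⊗ₜ[R] (1 : H) ∈ tensorSub (Jp R H 1) (⊤ : Submodule R H) :=
      tmul_mem_tensorSub (hy 0) Submodule.mem_top
    have humem' : (1 : H) ⊗ₜ[R] u ∈ tensorSub (⊤ : Submodule R H) (Jp R H 1) :=
      tmul_mem_tensorSub Submodule.mem_top (hy 0)
    have hMt : (1 : H) ⊗ₜ[R] M ∈ tensorSub (⊤ : Submodule R H) (Jp R H (m + 1)) :=
      tmul_mem_tensorSub Submodule.mem_top hMmem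
    refine add_mem (add_mem (add_mem (add_mem (add_mem ?_ ?_) ?_) ?_) ?_) ?_
    · -- (u⊗1) * T : Jp1*Jp1=Jp2, ⊤
      exact Submodule.mem_sup_left
        (mul_mem_tensorSub humem hTmem (fun x hx c hc => Jp_mul_mem hx hc)
          (fun x _ d _ => Submodule.mem_top))
    · -- (u⊗1) * e
      rw [← hEe, mul_add]
      refine add_mem ?_ ?_
      · -- (u⊗1)*e1 : Jp1*Jp2 ⊆ Jp2, ⊤
        exact Submodule.mem_sup_left
          (mul_mem_tensorSub humem he1 (fun x _ c hc => Jp_mul_left hc x)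
            (fun x _ d _ => Submodule.mem_top))
      · -- (u⊗1)*e2 : Jp1*Jp1=Jp2, ⊤
        exact Submodule.mem_sup_left
          (mul_mem_tensorSub humem he2 (fun x hx c hc => Jp_mul_mem hx hc)
            (fun x _ d _ => Submodule.mem_top))
    · -- (1⊗u) * e
      rw [← hEe, mul_add]
      refine add_mem ?_ ?_
      · -- (1⊗u)*e1 : ⊤*Jp2 ⊆ Jp2, Jp1*⊤ ⊆ ⊤
        exact Submodule.mem_sup_left
          (mul_mem_tensorSub humem' he1 (fun x _ c hc => Jp_mul_left hc x)
            (fun x _ d _ => Submodule.mem_top))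
      · -- (1⊗u)*e2 : ⊤*Jp1 ⊆ Jp1, Jp1*Jp(m+1) = Jp(m+2)
        exact Submodule.mem_sup_right
          (mul_mem_tensorSub humem' he2 (fun x _ c hc => Jp_mul_left hc x)
            (fun x hx d hd => by rw [mul_comm]; exact Jp_mul_mem hd hx))
    · -- s * (1⊗M) : Jp1*⊤ ⊆ Jp1, Jp1*Jp(m+1) = Jp(m+2)
      exact Submodule.mem_sup_right
        (mul_mem_tensorSub hs hMt (fun x hx c _ => Jp_mul_right hx c)
          (fun x hx d hd => by rw [mul_comm]; exact Jp_mul_mem hd hx))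
    · -- s * T : Jp2, ⊤
      exact Submodule.mem_sup_left
        (mul_mem_tensorSub hs hTmem (fun x hx c hc => Jp_mul_mem hx hc)
          (fun x _ d _ => Submodule.mem_top))
    · -- s * e
      rw [← hEe, mul_add]
      refine add_mem ?_ ?_
      · exact Submodule.mem_sup_left
          (mul_mem_tensorSub hs he1 (fun x _ c hc => Jp_mul_left hc x)
            (fun x _ d _ => Submodule.mem_top))
      · exact Submodule.mem_sup_left
          (mul_mem_tensorSub hs he2 (fun x hx c hc => Jp_mul_mem hx hc)
            (fun x _ d _ => Submodule.mem_top))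

/-! ### The main computation -/

set_option maxHeartbeats 1600000 in
lemma convFam_prod : ∀ (n : ℕ) (Z : Fin n → (H →ₗ[R] R)),
    (∀ j, IsInfinitesimalCharacter (Z j)) →
    ∀ (y : Fin n → H), (∀ j, y j ∈ Jp R H 1) →
    convFam n Z (∏ j, y j) = ∑ σ : Equiv.Perm (Fin n), ∏ j, Z (σ j) (y j) := by
  intro n
  induction n with
  | zero =>
    intro Z _ y _
    show Coalgebra.counit (R := R) (∏ j : Fin 0, y j) = _
    have h1 : (∏ j : Fin 0, y j) = (1 : H) := by simp
    rw [h1, Bialgebra.counit_one]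
    have h2 : ∀ σ : Equiv.Perm (Fin 0), (∏ j : Fin 0, Z (σ j) (y j)) = 1 := fun σ => by simp
    rw [Finset.sum_congr rfl (fun σ _ => h2 σ), Finset.sum_const]
    simp [Finset.card_univ, Fintype.card_perm]
  | succ n ih =>
    intro Z hZ y hy
    have hWkill : ∀ h ∈ Jp R H (n + 1), convFam n (fun i => Z i.succ) h = 0 :=
      convFam_vanish n _ (fun j => hZ j.succ)
    have hstruct := comul_prod n y hy
    set N : H ⊗[R] H :=
      ∑ j : Fin (n + 1), (y j) ⊗ₜ[R] (∏ i : Fin n, y (j.succAbove i)) with hNdef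
    set Pr : H := ∏ j : Fin (n + 1), y j with hPr
    set err : H ⊗[R] H := Coalgebra.comul (R := R) Pr - (1 : H) ⊗ₜ[R] Pr - N with herr
    have hΔ : Coalgebra.comul (R := R) Pr = (1 : H) ⊗ₜ[R] Pr + N + err := by
      rw [herr]; abel
    have hL : convFam (n + 1) Z Pr
        = ev (Z 0) (convFam n (fun i => Z i.succ)) (Coalgebra.comul (R := R) Pr) := rfl
    rw [hL, hΔ, map_add, map_add]
    have t1 : ev (Z 0) (convFam n (fun i => Z i.succ)) ((1 : H) ⊗ₜ[R] Pr) = 0 := by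
      rw [ev_tmul, char_one (hZ 0), zero_mul]
    have t3 : ev (Z 0) (convFam n (fun i => Z i.succ)) err = 0 := by
      rcases Submodule.mem_sup.mp hstruct with ⟨e1, he1, e2, he2, hEe⟩
      rw [← hEe, map_add]
      rw [ev_zero_left (char_kills_Jp (hZ 0) le_rfl) he1]
      rw [ev_zero_right hWkill he2]
      ring
    have t2 : ev (Z 0) (convFam n (fun i => Z i.succ)) N
        = ∑ j : Fin (n + 1), (Z 0) (y j)
            * ∑ τ : Equiv.Perm (Fin n), ∏ i, Z ((τ i).succ) (y (j.succAbove i)) := by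
      rw [hNdef, map_sum]
      apply Finset.sum_congr rfl
      intro j _
      rw [ev_tmul]
      congr 1
      exact ih (fun i => Z i.succ) (fun i => hZ i.succ)
        (fun i => y (j.succAbove i)) (fun i => hy (j.succAbove i))
    rw [t1, t2, t3, zero_add, add_zero]
    -- combinatorial identity
    have inv_bij : ∀ m : ℕ, Function.Bijective (fun τ : Equiv.Perm (Fin m) => τ⁻¹) :=
      fun m => inv_involutive.bijective
    have inner : ∀ j : Fin (n + 1),
        (∑ τ : Equiv.Perm (Fin n), ∏ i, Z ((τ i).succ) (y (j.succAbove i)))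
          = ∑ τ : Equiv.Perm (Fin n), ∏ i, Z (Fin.succ i) (y (j.succAbove (τ i))) := by
      intro j
      refine Fintype.sum_bijective _ (inv_bij n) _ _ ?_
      intro τ
      refine Fintype.prod_bijective (fun i => τ i) (Equiv.bijective τ) _ _ ?_
      intro i
      simp
    have outer : (∑ σ : Equiv.Perm (Fin (n + 1)), ∏ j, Z (σ j) (y j))
        = ∑ σ : Equiv.Perm (Fin (n + 1)), ∏ j, Z j (y (σ j)) := by
      refine Fintype.sum_bijective _ (inv_bij (n + 1)) _ _ ?_
      intro σ
      refine Fintype.prod_bijective (fun j => σ j) (Equiv.bijective σ) _ _ ?_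
      intro j
      simp
    have hcompat : ∀ p : Fin (n + 1) × Equiv.Perm (Fin n),
        Z 0 (y p.1) * ∏ i, Z (Fin.succ i) (y (p.1.succAbove (p.2 i)))
          = ∏ j, Z j (y ((insEquiv p.1 p.2) j)) := by
      intro p
      rw [Fin.prod_univ_succ, insEquiv_zero]
      rw [show (∏ i : Fin n, Z i.succ (y ((insEquiv p.1 p.2) i.succ)))
          = ∏ i : Fin n, Z (Fin.succ i) (y (p.1.succAbove (p.2 i))) from
        Finset.prod_congr rfl (fun i _ => by rw [insEquiv_succ])]
    calc
      (∑ j : Fin (n + 1), Z 0 (y j)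
          * ∑ τ : Equiv.Perm (Fin n), ∏ i, Z ((τ i).succ) (y (j.succAbove i)))
          = ∑ j : Fin (n + 1), ∑ τ : Equiv.Perm (Fin n),
              Z 0 (y j) * ∏ i, Z (Fin.succ i) (y (j.succAbove (τ i))) := by
            exact Finset.sum_congr rfl (fun j _ => by rw [inner j, Finset.mul_sum])
      _ = ∑ p : Fin (n + 1) × Equiv.Perm (Fin n),
            Z 0 (y p.1) * ∏ i, Z (Fin.succ i) (y (p.1.succAbove (p.2 i))) :=
          (Fintype.sum_prod_type (fun p : Fin (n + 1) × Equiv.Perm (Fin n) =>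
            Z 0 (y p.1) * ∏ i, Z (Fin.succ i) (y (p.1.succAbove (p.2 i))))).symm
      _ = ∑ σ : Equiv.Perm (Fin (n + 1)), ∏ j, Z j (y (σ j)) :=
          Fintype.sum_bijective _ (insEquiv_bijective n) _ _ hcompat
      _ = ∑ σ : Equiv.Perm (Fin (n + 1)), ∏ j, Z (σ j) (y j) := outer.symm

end CMKAux

/-- In a CMK Hopf algebra `H`, for infinitesimal characters `Z₁, …, Zₙ` (`n ≥ 1`) and basis
elements `x_{i₁}, …, x_{iₙ}` of `V`, one has
`⟨Z₁ * ⋯ * Zₙ, x_{i₁} ⋯ x_{iₙ}⟩ = Σ_{σ ∈ Sₙ} Π_j Z_{σ(j)}(x_{i_j})`. -/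
theorem cmk_convolution_on_monomials
    {R H : Type*} [Field R] [CharZero R] [CommRing H] [HopfAlgebra R H]
    (x : ℕ → H)
    (hfree : Function.Bijective (MvPolynomial.aeval x : MvPolynomial ℕ R →ₐ[R] H))
    (hΔx : ∀ i, Coalgebra.comul (R := R) (x i) - x i ⊗ₜ[R] (1 : H) - (1 : H) ⊗ₜ[R] x i
      ∈ tensorSub (⊤ : Submodule R H) (genSpan R x))
    (hεx : ∀ i, Coalgebra.counit (R := R) (x i) = 0)
    (𝒜 : ℕ → Submodule R H)
    (hdirect : DirectSum.IsInternal 𝒜)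
    (hmul : ∀ (p q : ℕ), ∀ a ∈ 𝒜 p, ∀ b ∈ 𝒜 q, a * b ∈ 𝒜 (p + q))
    (hcomul : ∀ n : ℕ, ∀ h ∈ 𝒜 n,
      Coalgebra.comul (R := R) h ∈
        ⨆ (p : ℕ × ℕ) (_ : p.1 + p.2 = n), tensorSub (𝒜 p.1) (𝒜 p.2))
    (hconn : 𝒜 0 = Submodule.span R {(1 : H)})
    (hx : ∀ i, ∃ n : ℕ, 0 < n ∧ x i ∈ 𝒜 n)
    (n : ℕ) (hn : 1 ≤ n)
    (Z : Fin n → (H →ₗ[R] R)) (hZ : ∀ j, IsInfinitesimalCharacter (Z j))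
    (idx : Fin n → ℕ) :
    convFam n Z (∏ j, x (idx j)) =
      ∑ σ : Equiv.Perm (Fin n), ∏ j, Z (σ j) (x (idx j)) := by
  exact CMKAux.convFam_prod n Z hZ (fun j => x (idx j))
    (fun j => CMKAux.mem_Jp_one.mpr (hεx (idx j)))
end

section
/- Let H = ⊕_{n∈ℕ} H^n be an ℕ-graded Hopf algebra over ℂ, let θ_z (z∈ℂ) be the grading automorphism acting as e^{nz} on H^n, and for ψ∈H* let θ*_z ψ = ψ∘θ_z. Suppose φ_ε ∈ Char H for every real ε ≠ 0, and suppose that for every t∈ℝ the convolution φ_ε^{*−1} * θ*_{tε}(φ_ε) converges pointwise on H, as ε→0, to a functional F_t ∈ H* (where φ_ε^{*−1} = φ_ε∘S is the convolution inverse). Then F is a flow: F_{t+s} = F_t * F_s for all s,t ∈ ℝ. -/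
open TensorProduct

/-- A character of `H`: a nonzero `R`-linear multiplicative map `H → R`. -/
def IsCharacter {R H : Type*} [CommSemiring R] [Semiring H] [Module R H]
    (χ : H →ₗ[R] R) : Prop :=
  χ ≠ 0 ∧ ∀ a b : H, χ (a * b) = χ a * χ b

namespace FlowAux

open Coalgebra

variable {H : Type*} [Ring H] [HopfAlgebra ℂ H]

theorem conv_apply (ξ η : H →ₗ[ℂ] ℂ) (h : H) :
    conv ξ η h = LinearMap.mul' ℂ ℂ (TensorProduct.map ξ η (comul h)) := rfl

theorem conv_assoc (ξ η ζ : H →ₗ[ℂ] ℂ) : conv (conv ξ η) ζ = conv ξ (conv η ζ) := by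
  ext h
  have claim1 : ∀ y : H ⊗[ℂ] H,
      LinearMap.mul' ℂ ℂ (TensorProduct.map (conv ξ η) ζ y) =
      (LinearMap.mul' ℂ ℂ ∘ₗ TensorProduct.map (LinearMap.mul' ℂ ℂ ∘ₗ TensorProduct.map ξ η) ζ)
        ((Coalgebra.comul (R := ℂ) (A := H)).rTensor H y) := by
    intro y
    induction y using TensorProduct.induction_on with
    | zero => simp
    | tmul a b => simp [conv_apply]
    | add u v hu hv => simp only [map_add, hu, hv]
  have claim2 : ∀ y : H ⊗[ℂ] H,
      LinearMap.mul' ℂ ℂ (TensorProduct.map ξ (conv η ζ) y) =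
      (LinearMap.mul' ℂ ℂ ∘ₗ TensorProduct.map ξ (LinearMap.mul' ℂ ℂ ∘ₗ TensorProduct.map η ζ))
        ((Coalgebra.comul (R := ℂ) (A := H)).lTensor H y) := by
    intro y
    induction y using TensorProduct.induction_on with
    | zero => simp
    | tmul a b => simp [conv_apply]
    | add u v hu hv => simp only [map_add, hu, hv]
  have claim3 :
      (LinearMap.mul' ℂ ℂ ∘ₗ TensorProduct.map (LinearMap.mul' ℂ ℂ ∘ₗ TensorProduct.map ξ η) ζ) =
      (LinearMap.mul' ℂ ℂ ∘ₗ TensorProduct.map ξ (LinearMap.mul' ℂ ℂ ∘ₗ TensorProduct.map η ζ)) ∘ₗ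
        (TensorProduct.assoc ℂ H H H).toLinearMap := by
    apply TensorProduct.ext_threefold
    intro a b c
    simp [mul_assoc]
  calc conv (conv ξ η) ζ h
      = LinearMap.mul' ℂ ℂ (TensorProduct.map (conv ξ η) ζ (comul h)) := rfl
    _ = (LinearMap.mul' ℂ ℂ ∘ₗ TensorProduct.map (LinearMap.mul' ℂ ℂ ∘ₗ TensorProduct.map ξ η) ζ)
        ((Coalgebra.comul (R := ℂ) (A := H)).rTensor H (comul h)) := claim1 _
    _ = (LinearMap.mul' ℂ ℂ ∘ₗ TensorProduct.map ξ (LinearMap.mul' ℂ ℂ ∘ₗ TensorProduct.map η ζ))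
        ((TensorProduct.assoc ℂ H H H)
          ((Coalgebra.comul (R := ℂ) (A := H)).rTensor H (comul h))) := by
        rw [claim3]; rfl
    _ = (LinearMap.mul' ℂ ℂ ∘ₗ TensorProduct.map ξ (LinearMap.mul' ℂ ℂ ∘ₗ TensorProduct.map η ζ))
        ((Coalgebra.comul (R := ℂ) (A := H)).lTensor H (comul h)) := by
        rw [Coalgebra.coassoc_apply]
    _ = conv ξ (conv η ζ) h := (claim2 _).symm

theorem conv_counit (ξ : H →ₗ[ℂ] ℂ) : conv ξ (Coalgebra.counit) = ξ := by
  ext h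
  have : ∀ y : H ⊗[ℂ] H, LinearMap.mul' ℂ ℂ (TensorProduct.map ξ Coalgebra.counit y) =
      (LinearMap.mul' ℂ ℂ ∘ₗ (ξ.rTensor ℂ)) ((Coalgebra.counit (R := ℂ)).lTensor H y) := by
    intro y
    induction y using TensorProduct.induction_on with
    | zero => simp
    | tmul a b => simp
    | add u v hu hv => simp only [map_add, hu, hv]
  calc conv ξ Coalgebra.counit h
      = LinearMap.mul' ℂ ℂ (TensorProduct.map ξ Coalgebra.counit (comul h)) := rfl
    _ = (LinearMap.mul' ℂ ℂ ∘ₗ (ξ.rTensor ℂ)) ((Coalgebra.counit (R := ℂ)).lTensor H (comul h)) :=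
        this _
    _ = ξ h := by rw [Coalgebra.lTensor_counit_comul]; simp

theorem counit_conv (η : H →ₗ[ℂ] ℂ) : conv (Coalgebra.counit) η = η := by
  ext h
  have : ∀ y : H ⊗[ℂ] H, LinearMap.mul' ℂ ℂ (TensorProduct.map Coalgebra.counit η y) =
      (LinearMap.mul' ℂ ℂ ∘ₗ (η.lTensor ℂ)) ((Coalgebra.counit (R := ℂ)).rTensor H y) := by
    intro y
    induction y using TensorProduct.induction_on with
    | zero => simp
    | tmul a b => simp
    | add u v hu hv => simp only [map_add, hu, hv]
  calc conv Coalgebra.counit η h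
      = LinearMap.mul' ℂ ℂ (TensorProduct.map Coalgebra.counit η (comul h)) := rfl
    _ = (LinearMap.mul' ℂ ℂ ∘ₗ (η.lTensor ℂ)) ((Coalgebra.counit (R := ℂ)).rTensor H (comul h)) :=
        this _
    _ = η h := by rw [Coalgebra.rTensor_counit_comul]; simp

theorem char_one {χ : H →ₗ[ℂ] ℂ} (hχ : IsCharacter χ) : χ 1 = 1 := by
  obtain ⟨hne, hmul⟩ := hχ
  have hsq : χ 1 * χ 1 = χ 1 := by rw [← hmul]; rw [mul_one]
  have hfac : χ 1 * (χ 1 - 1) = 0 := by ring_nf; linear_combination hsq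
  rcases mul_eq_zero.mp hfac with h0 | h1
  · exfalso
    apply hne
    ext a
    have := hmul a 1
    rw [mul_one, h0, mul_zero] at this
    simpa using this
  · exact sub_eq_zero.mp h1

theorem conv_comp (ξ η : H →ₗ[ℂ] ℂ) (f : H →ₗ[ℂ] H)
    (hf : (Coalgebra.comul (R := ℂ)) ∘ₗ f = TensorProduct.map f f ∘ₗ Coalgebra.comul) :
    conv (ξ ∘ₗ f) (η ∘ₗ f) = conv ξ η ∘ₗ f := by
  ext h
  have h1 : Coalgebra.comul (R := ℂ) (f h) = TensorProduct.map f f (comul h) :=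
    LinearMap.congr_fun hf h
  have h2 : TensorProduct.map (ξ ∘ₗ f) (η ∘ₗ f) = TensorProduct.map ξ η ∘ₗ TensorProduct.map f f :=
    TensorProduct.map_comp ξ η f f
  simp only [conv, LinearMap.comp_apply, h1, h2]

theorem conv_antipode_right {χ : H →ₗ[ℂ] ℂ} (hχ : IsCharacter χ) :
    conv χ (χ ∘ₗ HopfAlgebra.antipode (R := ℂ) (A := H)) = Coalgebra.counit := by
  ext h
  have key : ∀ y : H ⊗[ℂ] H,
      LinearMap.mul' ℂ ℂ
        (TensorProduct.map χ (χ ∘ₗ HopfAlgebra.antipode (R := ℂ) (A := H)) y) =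
      χ (LinearMap.mul' ℂ H ((HopfAlgebra.antipode (R := ℂ) (A := H)).lTensor H y)) := by
    intro y
    induction y using TensorProduct.induction_on with
    | zero => simp
    | tmul a b => simp [hχ.2]
    | add u v hu hv => simp only [map_add, hu, hv]
  calc conv χ (χ ∘ₗ HopfAlgebra.antipode (R := ℂ) (A := H)) h
      = LinearMap.mul' ℂ ℂ
        (TensorProduct.map χ (χ ∘ₗ HopfAlgebra.antipode (R := ℂ) (A := H)) (comul h)) := rfl
    _ = χ (LinearMap.mul' ℂ H
          ((HopfAlgebra.antipode (R := ℂ) (A := H)).lTensor H (comul h))) := key _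
    _ = χ (algebraMap ℂ H (Coalgebra.counit h)) := by
          rw [HopfAlgebra.mul_antipode_lTensor_comul_apply]
    _ = Coalgebra.counit (R := ℂ) h := by
          rw [Algebra.algebraMap_eq_smul_one, map_smul, char_one hχ]
          simp

theorem antipode_conv_left {χ : H →ₗ[ℂ] ℂ} (hχ : IsCharacter χ) :
    conv (χ ∘ₗ HopfAlgebra.antipode (R := ℂ) (A := H)) χ = Coalgebra.counit := by
  ext h
  have key : ∀ y : H ⊗[ℂ] H,
      LinearMap.mul' ℂ ℂ
        (TensorProduct.map (χ ∘ₗ HopfAlgebra.antipode (R := ℂ) (A := H)) χ y) =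
      χ (LinearMap.mul' ℂ H ((HopfAlgebra.antipode (R := ℂ) (A := H)).rTensor H y)) := by
    intro y
    induction y using TensorProduct.induction_on with
    | zero => simp
    | tmul a b => simp [hχ.2]
    | add u v hu hv => simp only [map_add, hu, hv]
  calc conv (χ ∘ₗ HopfAlgebra.antipode (R := ℂ) (A := H)) χ h
      = LinearMap.mul' ℂ ℂ
        (TensorProduct.map (χ ∘ₗ HopfAlgebra.antipode (R := ℂ) (A := H)) χ (comul h)) := rfl
    _ = χ (LinearMap.mul' ℂ H
          ((HopfAlgebra.antipode (R := ℂ) (A := H)).rTensor H (comul h))) := key _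
    _ = χ (algebraMap ℂ H (Coalgebra.counit h)) := by
          rw [HopfAlgebra.mul_antipode_rTensor_comul_apply]
    _ = Coalgebra.counit (R := ℂ) h := by
          rw [Algebra.algebraMap_eq_smul_one, map_smul, char_one hχ]
          simp

set_option synthInstance.maxHeartbeats 400000 in
theorem agree_on_sup {W : Type*} [AddCommMonoid W] [Module ℂ W]
    (𝒜 : ℕ → Submodule ℂ H) (n : ℕ) {x : H ⊗[ℂ] H}
    (hx : x ∈ ⨆ (p : ℕ × ℕ) (_ : p.1 + p.2 = n), tensorSub (𝒜 p.1) (𝒜 p.2))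
    (f g : H ⊗[ℂ] H →ₗ[ℂ] W)
    (hgen : ∀ i j, i + j = n → ∀ a ∈ 𝒜 i, ∀ b ∈ 𝒜 j, f (a ⊗ₜ[ℂ] b) = g (a ⊗ₜ[ℂ] b)) :
    f x = g x := by
  refine Submodule.iSup_induction (motive := fun z => f z = g z) _ hx ?_ (by simp) ?_
  · intro p y hy
    by_cases hp : p.1 + p.2 = n
    · rw [iSup_pos hp] at hy
      refine Submodule.span_induction ?_ (by simp) ?_ ?_ hy
      · rintro z ⟨a, ha, b, hb, rfl⟩
        exact hgen p.1 p.2 hp a ha b hb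
      · intro z₁ z₂ _ _ h1 h2
        simp only [map_add, h1, h2]
      · intro c z _ h1
        simp only [map_smul, h1]
    · rw [iSup_neg hp] at hy
      simp only [Submodule.mem_bot] at hy
      simp [hy]
  · intro z₁ z₂ h1 h2
    simp only [map_add, h1, h2]

theorem ext_of_graded {W : Type*} [AddCommMonoid W] [Module ℂ W]
    (𝒜 : ℕ → Submodule ℂ H) (hdirect : DirectSum.IsInternal 𝒜)
    (f g : H →ₗ[ℂ] W) (hgen : ∀ n, ∀ a ∈ 𝒜 n, f a = g a) : f = g := by
  ext x
  have hx : x ∈ ⨆ n, 𝒜 n := by rw [hdirect.submodule_iSup_eq_top]; trivial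
  refine Submodule.iSup_induction (motive := fun z => f z = g z) _ hx
    (fun n a ha => hgen n a ha) (by simp) ?_
  intro z₁ z₂ h1 h2
  simp only [map_add, h1, h2]

set_option synthInstance.maxHeartbeats 400000 in
noncomputable def proj (𝒜 : ℕ → Submodule ℂ H) [DirectSum.Decomposition 𝒜] (d : ℕ) :
    H →ₗ[ℂ] H where
  toFun a := ↑((DirectSum.decomposeLinearEquiv 𝒜 a) d)
  map_add' a b := by
    show (↑((DirectSum.decomposeLinearEquiv 𝒜 (a + b)) d) : H) = _
    rw [map_add, DirectSum.add_apply, Submodule.coe_add]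
  map_smul' c a := by
    show (↑((DirectSum.decomposeLinearEquiv 𝒜 (c • a)) d) : H) = _
    rw [map_smul, DirectSum.smul_apply, Submodule.coe_smul]
    rfl

@[simp] theorem proj_apply (𝒜 : ℕ → Submodule ℂ H) [DirectSum.Decomposition 𝒜] (d : ℕ)
    (a : H) : proj 𝒜 d a = ↑(DirectSum.decompose 𝒜 a d) := rfl

theorem proj_of_mem_same (𝒜 : ℕ → Submodule ℂ H) [DirectSum.Decomposition 𝒜] {d : ℕ}
    {a : H} (ha : a ∈ 𝒜 d) : proj 𝒜 d a = a := DirectSum.decompose_of_mem_same 𝒜 ha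

theorem proj_of_mem_ne (𝒜 : ℕ → Submodule ℂ H) [DirectSum.Decomposition 𝒜] {i d : ℕ}
    {a : H} (ha : a ∈ 𝒜 i) (hne : i ≠ d) : proj 𝒜 d a = 0 :=
  DirectSum.decompose_of_mem_ne 𝒜 ha hne

set_option maxHeartbeats 1000000 in
set_option synthInstance.maxHeartbeats 400000 in
theorem counit_eq_zero (𝒜 : ℕ → Submodule ℂ H) (hdirect : DirectSum.IsInternal 𝒜)
    (hcomul : ∀ n : ℕ, ∀ h ∈ 𝒜 n,
      Coalgebra.comul (R := ℂ) h ∈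
        ⨆ (p : ℕ × ℕ) (_ : p.1 + p.2 = n), tensorSub (𝒜 p.1) (𝒜 p.2)) :
    ∀ n : ℕ, 0 < n → ∀ h ∈ 𝒜 n, Coalgebra.counit (R := ℂ) h = 0 := by
  letI : DirectSum.Decomposition 𝒜 := hdirect.chooseDecomposition
  intro n
  induction n using Nat.strong_induction_on with
  | _ n IH =>
    intro hn h hh
    have hx := hcomul n h hh
    set cu : H →ₗ[ℂ] ℂ := Coalgebra.counit (R := ℂ) with hcu
    set e : H ⊗[ℂ] H →ₗ[ℂ] ℂ := LinearMap.mul' ℂ ℂ ∘ₗ TensorProduct.map cu cu with he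
    have etmul : ∀ a b : H, e (a ⊗ₜ[ℂ] b) = cu a * cu b := by
      intro a b; simp [he]
    -- factorisations of e
    have eA : ∀ y : H ⊗[ℂ] H,
        e y = LinearMap.mul' ℂ ℂ ((LinearMap.lTensor ℂ cu) ((cu.rTensor H) y)) := by
      intro y
      induction y using TensorProduct.induction_on with
      | zero => simp
      | tmul a b => simp [he]
      | add u v hu hv => simp only [map_add, hu, hv]
    have eC : ∀ y : H ⊗[ℂ] H,
        e y = LinearMap.mul' ℂ ℂ ((cu.rTensor ℂ) ((LinearMap.lTensor H cu) y)) := by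
      intro y
      induction y using TensorProduct.induction_on with
      | zero => simp
      | tmul a b => simp [he, mul_comm]
      | add u v hu hv => simp only [map_add, hu, hv]
    have hrt : (cu.rTensor H) (Coalgebra.comul (R := ℂ) h) = (1 : ℂ) ⊗ₜ[ℂ] h := by
      rw [hcu]; exact Coalgebra.rTensor_counit_comul h
    have hlt : (LinearMap.lTensor H cu) (Coalgebra.comul (R := ℂ) h) = h ⊗ₜ[ℂ] (1 : ℂ) := by
      rw [hcu]; exact Coalgebra.lTensor_counit_comul h
    -- claim A
    have claimA : e (Coalgebra.comul (R := ℂ) h) = cu h := by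
      rw [eA, hrt, LinearMap.lTensor_tmul]
      simp
    -- claim B
    have stepB : (cu.rTensor H) (((proj 𝒜 0).rTensor H) (Coalgebra.comul (R := ℂ) h)) =
        (LinearMap.lTensor ℂ (proj 𝒜 n)) ((cu.rTensor H) (Coalgebra.comul (R := ℂ) h)) := by
      refine agree_on_sup 𝒜 n hx ((cu.rTensor H) ∘ₗ ((proj 𝒜 0).rTensor H))
        ((LinearMap.lTensor ℂ (proj 𝒜 n)) ∘ₗ (cu.rTensor H)) ?_
      intro i j hij a ha b hb
      simp only [LinearMap.comp_apply, LinearMap.rTensor_tmul, LinearMap.lTensor_tmul]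
      by_cases hi : i = 0
      · subst hi
        have hbn : b ∈ 𝒜 n := by rwa [← hij, zero_add]
        rw [proj_of_mem_same 𝒜 ha, proj_of_mem_same 𝒜 hbn]
      · have hjn : j ≠ n := fun hj => hi (by omega)
        rw [proj_of_mem_ne 𝒜 ha hi, proj_of_mem_ne 𝒜 hb hjn]
        simp
    have claimB : e (((proj 𝒜 0).rTensor H) (Coalgebra.comul (R := ℂ) h)) = cu h := by
      rw [eA, stepB, hrt, LinearMap.lTensor_tmul, proj_of_mem_same 𝒜 hh,
        LinearMap.lTensor_tmul]
      simp
    -- claim C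
    have stepC : (LinearMap.lTensor H cu) (((proj 𝒜 0).lTensor H) (Coalgebra.comul (R := ℂ) h)) =
        ((proj 𝒜 n).rTensor ℂ) ((LinearMap.lTensor H cu) (Coalgebra.comul (R := ℂ) h)) := by
      refine agree_on_sup 𝒜 n hx ((LinearMap.lTensor H cu) ∘ₗ ((proj 𝒜 0).lTensor H))
        (((proj 𝒜 n).rTensor ℂ) ∘ₗ (LinearMap.lTensor H cu)) ?_
      intro i j hij a ha b hb
      simp only [LinearMap.comp_apply, LinearMap.rTensor_tmul, LinearMap.lTensor_tmul]
      by_cases hj : j = 0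
      · subst hj
        have han : a ∈ 𝒜 n := by rwa [← hij, add_zero]
        rw [proj_of_mem_same 𝒜 hb, proj_of_mem_same 𝒜 han]
      · have hin : i ≠ n := fun hi' => hj (by omega)
        rw [proj_of_mem_ne 𝒜 hb hj, proj_of_mem_ne 𝒜 ha hin]
        simp
    have claimC : e (((proj 𝒜 0).lTensor H) (Coalgebra.comul (R := ℂ) h)) = cu h := by
      rw [eC, stepC, hlt, LinearMap.rTensor_tmul, proj_of_mem_same 𝒜 hh,
        LinearMap.rTensor_tmul]
      simp
    -- claim E : the double projection kills everything
    have claimE : e ((TensorProduct.map (proj 𝒜 0) (proj 𝒜 0))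
        (Coalgebra.comul (R := ℂ) h)) = 0 := by
      have := agree_on_sup 𝒜 n hx
        (e ∘ₗ (TensorProduct.map (proj 𝒜 0) (proj 𝒜 0))) (0 : H ⊗[ℂ] H →ₗ[ℂ] ℂ) ?_
      · simpa using this
      intro i j hij a ha b hb
      simp only [LinearMap.comp_apply, TensorProduct.map_tmul, LinearMap.zero_apply]
      by_cases hi : i = 0
      · have hj : j ≠ 0 := by omega
        rw [proj_of_mem_ne 𝒜 hb hj]
        simp
      · rw [proj_of_mem_ne 𝒜 ha hi]
        simp
    -- claim D : inclusion-exclusion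
    have claimD : e (Coalgebra.comul (R := ℂ) h) =
        e (((proj 𝒜 0).rTensor H) (Coalgebra.comul (R := ℂ) h)) +
        e (((proj 𝒜 0).lTensor H) (Coalgebra.comul (R := ℂ) h)) -
        e ((TensorProduct.map (proj 𝒜 0) (proj 𝒜 0)) (Coalgebra.comul (R := ℂ) h)) := by
      have := agree_on_sup 𝒜 n hx e
        (e ∘ₗ ((proj 𝒜 0).rTensor H) + e ∘ₗ ((proj 𝒜 0).lTensor H) -
          e ∘ₗ (TensorProduct.map (proj 𝒜 0) (proj 𝒜 0))) ?_
      · simpa using this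
      intro i j hij a ha b hb
      simp only [LinearMap.comp_apply, LinearMap.sub_apply, LinearMap.add_apply,
        LinearMap.rTensor_tmul, LinearMap.lTensor_tmul, TensorProduct.map_tmul]
      by_cases hi : i = 0
      · subst hi
        have hj : j ≠ 0 := by omega
        rw [proj_of_mem_same 𝒜 ha, proj_of_mem_ne 𝒜 hb hj]
        simp [etmul]
      · by_cases hj : j = 0
        · subst hj
          rw [proj_of_mem_same 𝒜 hb, proj_of_mem_ne 𝒜 ha hi]
          simp [etmul]
        · have hilt : i < n := by omega
          have hca : cu a = 0 := IH i hilt (Nat.pos_of_ne_zero hi) a ha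
          rw [proj_of_mem_ne 𝒜 ha hi, proj_of_mem_ne 𝒜 hb hj]
          simp [etmul, hca]
    rw [claimA, claimB, claimC, claimE] at claimD
    linear_combination -claimD

theorem counit_theta (𝒜 : ℕ → Submodule ℂ H) (hdirect : DirectSum.IsInternal 𝒜)
    (hcomul : ∀ n : ℕ, ∀ h ∈ 𝒜 n,
      Coalgebra.comul (R := ℂ) h ∈
        ⨆ (p : ℕ × ℕ) (_ : p.1 + p.2 = n), tensorSub (𝒜 p.1) (𝒜 p.2))
    (θ : ℂ → (H →ₗ[ℂ] H))
    (hθ : ∀ (z : ℂ) (n : ℕ), ∀ h ∈ 𝒜 n, θ z h = Complex.exp (n * z) • h) (z : ℂ) :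
    (Coalgebra.counit (R := ℂ)) ∘ₗ θ z = Coalgebra.counit (R := ℂ) (A := H) := by
  refine ext_of_graded 𝒜 hdirect _ _ ?_
  intro n a ha
  simp only [LinearMap.comp_apply, hθ z n a ha, map_smul, smul_eq_mul]
  rcases Nat.eq_zero_or_pos n with h0 | hpos
  · subst h0; simp
  · rw [counit_eq_zero 𝒜 hdirect hcomul n hpos a ha]
    simp

theorem comul_theta (𝒜 : ℕ → Submodule ℂ H) (hdirect : DirectSum.IsInternal 𝒜)
    (hcomul : ∀ n : ℕ, ∀ h ∈ 𝒜 n,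
      Coalgebra.comul (R := ℂ) h ∈
        ⨆ (p : ℕ × ℕ) (_ : p.1 + p.2 = n), tensorSub (𝒜 p.1) (𝒜 p.2))
    (θ : ℂ → (H →ₗ[ℂ] H))
    (hθ : ∀ (z : ℂ) (n : ℕ), ∀ h ∈ 𝒜 n, θ z h = Complex.exp (n * z) • h) (z : ℂ) :
    Coalgebra.comul (R := ℂ) ∘ₗ θ z = TensorProduct.map (θ z) (θ z) ∘ₗ Coalgebra.comul := by
  refine ext_of_graded 𝒜 hdirect _ _ ?_
  intro n a ha
  simp only [LinearMap.comp_apply, hθ z n a ha, map_smul]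
  have key := agree_on_sup 𝒜 n (hcomul n a ha)
      (Complex.exp ((n : ℂ) * z) • (LinearMap.id : H ⊗[ℂ] H →ₗ[ℂ] H ⊗[ℂ] H))
      (TensorProduct.map (θ z) (θ z)) ?_
  · simpa using key
  intro i j hij a' ha' b' hb'
  subst hij
  rw [TensorProduct.map_tmul, hθ z i a' ha', hθ z j b' hb']
  simp only [LinearMap.smul_apply, LinearMap.id_apply, TensorProduct.smul_tmul',
    TensorProduct.tmul_smul, smul_smul]
  congr 1
  rw [← Complex.exp_add]
  congr 1
  push_cast
  ring

theorem theta_comp (𝒜 : ℕ → Submodule ℂ H) (hdirect : DirectSum.IsInternal 𝒜)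
    (θ : ℂ → (H →ₗ[ℂ] H))
    (hθ : ∀ (z : ℂ) (n : ℕ), ∀ h ∈ 𝒜 n, θ z h = Complex.exp (n * z) • h) (z w : ℂ) :
    θ w ∘ₗ θ z = θ (z + w) := by
  refine ext_of_graded 𝒜 hdirect _ _ ?_
  intro n a ha
  simp only [LinearMap.comp_apply, hθ z n a ha, map_smul, hθ w n a ha, hθ (z + w) n a ha,
    smul_smul]
  congr 1
  rw [← Complex.exp_add]
  congr 1
  ring

theorem flow_identity (𝒜 : ℕ → Submodule ℂ H) (hdirect : DirectSum.IsInternal 𝒜)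
    (hcomul : ∀ n : ℕ, ∀ h ∈ 𝒜 n,
      Coalgebra.comul (R := ℂ) h ∈
        ⨆ (p : ℕ × ℕ) (_ : p.1 + p.2 = n), tensorSub (𝒜 p.1) (𝒜 p.2))
    (θ : ℂ → (H →ₗ[ℂ] H))
    (hθ : ∀ (z : ℂ) (n : ℕ), ∀ h ∈ 𝒜 n, θ z h = Complex.exp (n * z) • h)
    {χ : H →ₗ[ℂ] ℂ} (hχ : IsCharacter χ) (z w : ℂ) :
    conv (conv (χ ∘ₗ HopfAlgebra.antipode (R := ℂ) (A := H)) (χ ∘ₗ θ z))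
      ((conv (χ ∘ₗ HopfAlgebra.antipode (R := ℂ) (A := H)) (χ ∘ₗ θ w)) ∘ₗ θ z) =
    conv (χ ∘ₗ HopfAlgebra.antipode (R := ℂ) (A := H)) (χ ∘ₗ θ (z + w)) := by
  have hcm := comul_theta 𝒜 hdirect hcomul θ hθ z
  rw [← conv_comp _ _ (θ z) hcm]
  rw [LinearMap.comp_assoc (θ z) (θ w) χ, theta_comp 𝒜 hdirect θ hθ z w]
  rw [conv_assoc]
  rw [← conv_assoc (χ ∘ₗ θ z) ((χ ∘ₗ HopfAlgebra.antipode (R := ℂ) (A := H)) ∘ₗ θ z)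
    (χ ∘ₗ θ (z + w))]
  rw [conv_comp χ (χ ∘ₗ HopfAlgebra.antipode (R := ℂ) (A := H)) (θ z) hcm]
  rw [conv_antipode_right hχ]
  rw [counit_theta 𝒜 hdirect hcomul θ hθ z]
  rw [counit_conv]

end FlowAux

open FlowAux Filter

set_option maxHeartbeats 1000000
set_option synthInstance.maxHeartbeats 400000

/-- Let `H` be an ℕ-graded Hopf algebra over ℂ, `θ_z` the grading automorphism acting as
`e^{nz}` on `Hⁿ`, and `φ_ε` a character for every real `ε ≠ 0`. If for every `t ∈ ℝ` the
convolution `φ_ε^{*−1} * θ*_{tε}(φ_ε)` (where `φ_ε^{*−1} = φ_ε ∘ S` and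
`θ*_{tε} φ_ε = φ_ε ∘ θ_{tε}`) converges pointwise on `H`, as `ε → 0` (`ε ≠ 0`), to a
functional `F_t ∈ H*`, then `F` is a flow: `F_{t+s} = F_t * F_s` for all `s, t ∈ ℝ`. -/
theorem limit_of_renormalized_loop_is_flow
    {H : Type*} [Ring H] [HopfAlgebra ℂ H]
    (𝒜 : ℕ → Submodule ℂ H)
    (hdirect : DirectSum.IsInternal 𝒜)
    (hmul : ∀ (p q : ℕ), ∀ a ∈ 𝒜 p, ∀ b ∈ 𝒜 q, a * b ∈ 𝒜 (p + q))
    (hcomul : ∀ n : ℕ, ∀ h ∈ 𝒜 n,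
      Coalgebra.comul (R := ℂ) h ∈
        ⨆ (p : ℕ × ℕ) (_ : p.1 + p.2 = n), tensorSub (𝒜 p.1) (𝒜 p.2))
    (θ : ℂ → (H →ₗ[ℂ] H))
    (hθ : ∀ (z : ℂ) (n : ℕ), ∀ h ∈ 𝒜 n, θ z h = Complex.exp (n * z) • h)
    (φ : ℝ → (H →ₗ[ℂ] ℂ))
    (hφ : ∀ ε : ℝ, ε ≠ 0 → IsCharacter (φ ε))
    (F : ℝ → (H →ₗ[ℂ] ℂ))
    (hF : ∀ (t : ℝ) (h : H),
      Filter.Tendsto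
        (fun ε : ℝ =>
          conv (φ ε ∘ₗ HopfAlgebra.antipode (R := ℂ) (A := H))
            (φ ε ∘ₗ θ ((t * ε : ℝ) : ℂ)) h)
        (nhdsWithin (0 : ℝ) {0}ᶜ) (nhds (F t h))) :
    ∀ s t : ℝ, F (t + s) = conv (F t) (F s) := by
  classical
  letI : DirectSum.Decomposition 𝒜 := hdirect.chooseDecomposition
  intro s t
  ext h
  set l : Filter ℝ := nhdsWithin (0 : ℝ) {0}ᶜ with hl
  -- the convergence of the exponential factors
  have expt : ∀ (n : ℕ) (t' : ℝ),
      Tendsto (fun ε : ℝ => Complex.exp ((n : ℂ) * ((t' * ε : ℝ) : ℂ))) l (nhds 1) := by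
    intro n t'
    have c1 : Continuous fun ε : ℝ => Complex.exp ((n : ℂ) * ((t' * ε : ℝ) : ℂ)) := by
      fun_prop
    have h0 := c1.tendsto 0
    simp only [mul_zero, Complex.ofReal_zero, Complex.exp_zero] at h0
    exact h0.mono_left nhdsWithin_le_nhds
  -- limit of the twisted right factor
  have Gtheta : ∀ b : H,
      Tendsto (fun ε : ℝ =>
        (conv (φ ε ∘ₗ HopfAlgebra.antipode (R := ℂ) (A := H))
          (φ ε ∘ₗ θ ((s * ε : ℝ) : ℂ))) (θ ((t * ε : ℝ) : ℂ) b)) l (nhds (F s b)) := by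
    intro b
    have hb : ∑ n ∈ (DirectSum.decompose 𝒜 b).support, (↑(DirectSum.decompose 𝒜 b n) : H) = b :=
      DirectSum.sum_support_decompose 𝒜 b
    have hcongr : ∀ ε : ℝ,
        (conv (φ ε ∘ₗ HopfAlgebra.antipode (R := ℂ) (A := H))
          (φ ε ∘ₗ θ ((s * ε : ℝ) : ℂ))) (θ ((t * ε : ℝ) : ℂ) b) =
        ∑ n ∈ (DirectSum.decompose 𝒜 b).support,
          Complex.exp ((n : ℂ) * ((t * ε : ℝ) : ℂ)) *
            (conv (φ ε ∘ₗ HopfAlgebra.antipode (R := ℂ) (A := H))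
              (φ ε ∘ₗ θ ((s * ε : ℝ) : ℂ))) (↑(DirectSum.decompose 𝒜 b n) : H) := by
      intro ε
      conv_lhs => rw [← hb]
      rw [map_sum, map_sum]
      refine Finset.sum_congr rfl ?_
      intro n _
      rw [hθ _ n _ (DirectSum.decompose 𝒜 b n).2, map_smul, smul_eq_mul]
    have hsum : Tendsto (fun ε : ℝ =>
        ∑ n ∈ (DirectSum.decompose 𝒜 b).support,
          Complex.exp ((n : ℂ) * ((t * ε : ℝ) : ℂ)) *
            (conv (φ ε ∘ₗ HopfAlgebra.antipode (R := ℂ) (A := H))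
              (φ ε ∘ₗ θ ((s * ε : ℝ) : ℂ))) (↑(DirectSum.decompose 𝒜 b n) : H)) l
        (nhds (∑ n ∈ (DirectSum.decompose 𝒜 b).support,
          F s (↑(DirectSum.decompose 𝒜 b n) : H))) := by
      refine tendsto_finset_sum _ ?_
      intro n _
      have := (expt n t).mul (hF s (↑(DirectSum.decompose 𝒜 b n) : H))
      simpa using this
    have hFb : ∑ n ∈ (DirectSum.decompose 𝒜 b).support,
        F s (↑(DirectSum.decompose 𝒜 b n) : H) = F s b := by
      rw [← map_sum, hb]
    rw [hFb] at hsum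
    exact hsum.congr (fun ε => (hcongr ε).symm)
  -- limit of the full convolution, on every tensor
  have main : ∀ x : H ⊗[ℂ] H,
      Tendsto (fun ε : ℝ =>
        LinearMap.mul' ℂ ℂ (TensorProduct.map
          (conv (φ ε ∘ₗ HopfAlgebra.antipode (R := ℂ) (A := H))
            (φ ε ∘ₗ θ ((t * ε : ℝ) : ℂ)))
          ((conv (φ ε ∘ₗ HopfAlgebra.antipode (R := ℂ) (A := H))
            (φ ε ∘ₗ θ ((s * ε : ℝ) : ℂ))) ∘ₗ θ ((t * ε : ℝ) : ℂ)) x)) l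
        (nhds (LinearMap.mul' ℂ ℂ (TensorProduct.map (F t) (F s) x))) := by
    intro x
    induction x using TensorProduct.induction_on with
    | zero => simp only [map_zero]; exact tendsto_const_nhds
    | tmul a b =>
      simp only [TensorProduct.map_tmul, LinearMap.mul'_apply, LinearMap.comp_apply]
      exact (hF t a).mul (Gtheta b)
    | add u v hu hv =>
      simp only [map_add]
      exact hu.add hv
  have lim2 := main (Coalgebra.comul (R := ℂ) h)
  -- identify the two expressions for ε ≠ 0
  have heq : (fun ε : ℝ =>
        conv (φ ε ∘ₗ HopfAlgebra.antipode (R := ℂ) (A := H))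
          (φ ε ∘ₗ θ (((t + s) * ε : ℝ) : ℂ)) h) =ᶠ[l]
      (fun ε : ℝ =>
        LinearMap.mul' ℂ ℂ (TensorProduct.map
          (conv (φ ε ∘ₗ HopfAlgebra.antipode (R := ℂ) (A := H))
            (φ ε ∘ₗ θ ((t * ε : ℝ) : ℂ)))
          ((conv (φ ε ∘ₗ HopfAlgebra.antipode (R := ℂ) (A := H))
            (φ ε ∘ₗ θ ((s * ε : ℝ) : ℂ))) ∘ₗ θ ((t * ε : ℝ) : ℂ))
          (Coalgebra.comul (R := ℂ) h))) := by
    filter_upwards [self_mem_nhdsWithin] with ε hε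
    have hεne : ε ≠ 0 := by simpa using hε
    have hχ := hφ ε hεne
    have key := flow_identity 𝒜 hdirect hcomul θ hθ hχ ((t * ε : ℝ) : ℂ) ((s * ε : ℝ) : ℂ)
    have hz : ((t * ε : ℝ) : ℂ) + ((s * ε : ℝ) : ℂ) = (((t + s) * ε : ℝ) : ℂ) := by
      push_cast; ring
    rw [hz] at key
    exact (LinearMap.congr_fun key h).symm
  have lim1 := (hF (t + s) h).congr' heq
  exact tendsto_nhds_unique lim1 lim2
end
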